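/- arXiv:2603.22801 — 7 statements merged into one kernel-verified Lean document; each statement's English description precedes it below -/
import Mathlib

section
/- Let x₁ ~ N(0, a) and x₂ ~ N(0, b) be independent Gaussian random variables with a, b > 0, and let σ be the ReLU function. Then E[x₁·σ(x₁+x₂)·σ'(x₁+x₂)] = a/2. -/
open MeasureTheory ProbabilityTheory
open scoped NNReal ENNReal

section helpers

open Real

variable {v : ℝ≥0}

lemma gauss_integral_eq (hv : v ≠ 0) (g : ℝ → ℝ) :
    ∫ x, g x ∂(gaussianReal 0 v) = ∫ x, gaussianPDFReal 0 v x * g x := by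
  rw [gaussianReal_of_var_ne_zero 0 hv]
  have h : gaussianPDF 0 v
      = fun x => (((gaussianPDFReal 0 v x).toNNReal : ℝ≥0) : ℝ≥0∞) := by
    funext x; rfl
  rw [h, integral_withDensity_eq_integral_smul
    ((measurable_gaussianPDFReal 0 v).real_toNNReal) g]
  congr 1; funext x
  simp [NNReal.smul_def, Real.coe_toNNReal _ (gaussianPDFReal_nonneg 0 v x)]

lemma gauss_integrable_iff (hv : v ≠ 0) {g : ℝ → ℝ} :
    Integrable g (gaussianReal 0 v) ↔
      Integrable (fun x => g x * gaussianPDFReal 0 v x) volume := by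
  rw [gaussianReal_of_var_ne_zero 0 hv, gaussianPDF_def,
    integrable_withDensity_iff (measurable_gaussianPDFReal 0 v).ennreal_ofReal
      (ae_of_all _ fun x => ENNReal.ofReal_lt_top)]
  simp_rw [ENNReal.toReal_ofReal (gaussianPDFReal_nonneg 0 v _)]

lemma gauss_pdf_eq (hv : v ≠ 0) (x : ℝ) :
    gaussianPDFReal 0 v x = (√(2 * π * v))⁻¹ * rexp (-(2 * (v:ℝ))⁻¹ * x ^ 2) := by
  rw [gaussianPDFReal]
  congr 1
  rw [sub_zero]
  congr 1
  rw [neg_div, neg_mul]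
  congr 1
  rw [div_eq_inv_mul]

lemma gauss_coe_pos (hv : v ≠ 0) : (0:ℝ) < (v:ℝ) :=
  NNReal.coe_pos.mpr (pos_iff_ne_zero.mpr hv)

lemma gauss_var_pos (hv : v ≠ 0) : (0:ℝ) < (2 * (v:ℝ))⁻¹ := by
  have h0 := gauss_coe_pos hv
  have : (0:ℝ) < 2 * (v:ℝ) := by linarith
  exact inv_pos.mpr this

lemma gauss_integrable_id (hv : v ≠ 0) :
    Integrable (fun x : ℝ => x) (gaussianReal 0 v) := by
  rw [gauss_integrable_iff hv]
  have hb : (0:ℝ) < (2 * (v:ℝ))⁻¹ := gauss_var_pos hv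
  have := (integrable_mul_exp_neg_mul_sq hb).const_mul (√(2 * π * v))⁻¹
  refine this.congr ?_
  filter_upwards with x
  rw [gauss_pdf_eq hv]
  ring

lemma gauss_integrable_sq (hv : v ≠ 0) :
    Integrable (fun x : ℝ => x ^ 2) (gaussianReal 0 v) := by
  rw [gauss_integrable_iff hv]
  have hb : (0:ℝ) < (2 * (v:ℝ))⁻¹ := gauss_var_pos hv
  have h2 := (integrable_rpow_mul_exp_neg_mul_sq hb (by norm_num : (-1:ℝ) < 2)).const_mul
    (√(2 * π * v))⁻¹
  refine h2.congr ?_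
  filter_upwards with x
  rw [gauss_pdf_eq hv, show ((2:ℝ)) = ((2:ℕ):ℝ) by norm_num, Real.rpow_natCast]
  push_cast
  ring

lemma gauss_map_neg (hv : v ≠ 0) :
    (gaussianReal 0 v).map (fun x => -x) = gaussianReal 0 v := by
  have h := gaussianReal_map_const_mul (μ := 0) (v := v) (-1)
  have h1 : (fun x : ℝ => -x) = ((-1 : ℝ) * ·) := by funext x; ring
  rw [h1, h]
  congr 1
  · ring
  · ext
    norm_num

lemma gauss_integral_id (hv : v ≠ 0) :
    ∫ x, x ∂(gaussianReal 0 v) = 0 := by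
  have h : ∫ x, x ∂(gaussianReal 0 v) = ∫ x, -x ∂(gaussianReal 0 v) := by
    conv_lhs => rw [← gauss_map_neg hv]
    rw [integral_map measurable_neg.aemeasurable]
    exact aestronglyMeasurable_id
  have h2 : ∫ x, -x ∂(gaussianReal 0 v) = -∫ x, x ∂(gaussianReal 0 v) := integral_neg _
  linarith [h, h2]

lemma integral_sq_exp (b : ℝ) (hb : 0 < b) :
    ∫ x : ℝ, x ^ 2 * rexp (-b * x ^ 2) = b ^ (-(3:ℝ)/2) * √π / 2 := by
  have heven : (fun x : ℝ => x ^ 2 * rexp (-b * x ^ 2))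
      = fun x : ℝ => |x| ^ 2 * rexp (-b * |x| ^ 2) := by
    funext x; rw [sq_abs]
  rw [heven, integral_comp_abs (f := fun x : ℝ => x ^ 2 * rexp (-b * x ^ 2))]
  have h := integral_rpow_mul_exp_neg_mul_rpow (p := 2) (q := 2) (b := b)
    (by norm_num) (by norm_num) hb
  have hco : ∀ x : ℝ, x ^ (2:ℝ) = x ^ (2:ℕ) := fun x => by
    rw [show ((2:ℝ)) = ((2:ℕ):ℝ) by norm_num, Real.rpow_natCast]
  simp_rw [hco] at h
  rw [h]
  have h32 : Real.Gamma ((2 + 1) / 2) = √π / 2 := by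
    rw [show ((2:ℝ) + 1)/2 = 1/2 + 1 by norm_num, Real.Gamma_add_one (by norm_num),
      Real.Gamma_one_half_eq]
    ring
  rw [h32, show (-((2:ℝ) + 1)/2) = -(3:ℝ)/2 by norm_num]
  ring

lemma gauss_integral_sq (hv : v ≠ 0) :
    ∫ x, x ^ 2 ∂(gaussianReal 0 v) = (v : ℝ) := by
  rw [gauss_integral_eq hv]
  have hvpos : (0:ℝ) < (v:ℝ) := gauss_coe_pos hv
  have hb : (0:ℝ) < (2 * (v:ℝ))⁻¹ := gauss_var_pos hv
  have h : (fun x : ℝ => gaussianPDFReal 0 v x * x ^ 2)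
      = fun x : ℝ => (√(2 * π * v))⁻¹ * (x ^ 2 * rexp (-(2 * (v:ℝ))⁻¹ * x ^ 2)) := by
    funext x; rw [gauss_pdf_eq hv]; ring
  rw [h, integral_const_mul, integral_sq_exp _ hb]
  have hv2 : (0:ℝ) < 2 * (v:ℝ) := by linarith
  have e1 : ((2*(v:ℝ))⁻¹) ^ (-(3:ℝ)/2) = (2*(v:ℝ)) ^ ((3:ℝ)/2) := by
    rw [show (-(3:ℝ)/2) = -((3:ℝ)/2) by ring, Real.inv_rpow hv2.le,
      Real.rpow_neg hv2.le, inv_inv]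
  have e2 : (2*(v:ℝ)) ^ ((3:ℝ)/2) = (2*(v:ℝ)) * √(2*(v:ℝ)) := by
    rw [show (3:ℝ)/2 = 1 + 1/2 by norm_num, Real.rpow_add hv2, Real.rpow_one,
      ← Real.sqrt_eq_rpow]
  have e3 : √(2 * π * (v:ℝ)) = √(2*(v:ℝ)) * √π := by
    rw [show (2:ℝ) * π * (v:ℝ) = (2*(v:ℝ)) * π by ring, Real.sqrt_mul hv2.le]
  rw [e1, e2, e3]
  have hs1 : √(2*(v:ℝ)) ≠ 0 := (Real.sqrt_pos.mpr hv2).ne'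
  have hs2 : √π ≠ 0 := (Real.sqrt_pos.mpr Real.pi_pos).ne'
  field_simp

end helpers

theorem gaussian_relu_sum_moment (a b : ℝ≥0) (ha : 0 < a) (hb : 0 < b) :
    ∫ p : ℝ × ℝ,
        p.1 * max (p.1 + p.2) 0 * (if 0 ≤ p.1 + p.2 then (1:ℝ) else 0)
        ∂((gaussianReal 0 a).prod (gaussianReal 0 b))
      = (a : ℝ) / 2 := by
  have ha' : a ≠ 0 := ha.ne'
  have hb' : b ≠ 0 := hb.ne'
  set μ := (gaussianReal 0 a).prod (gaussianReal 0 b) with hμ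
  set f : ℝ × ℝ → ℝ := fun p => p.1 * max (p.1 + p.2) 0 with hf
  have hsimp : (fun p : ℝ × ℝ =>
      p.1 * max (p.1 + p.2) 0 * (if 0 ≤ p.1 + p.2 then (1:ℝ) else 0)) = f := by
    funext p
    by_cases h : 0 ≤ p.1 + p.2
    · rw [if_pos h, mul_one]
    · rw [if_neg h, mul_zero, hf]
      simp only
      rw [max_eq_right (le_of_lt (not_le.mp h)), mul_zero]
  rw [hsimp]
  have hfc : Continuous f := by
    apply Continuous.mul continuous_fst
    exact (continuous_fst.add continuous_snd).max continuous_const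
  have hint1 : Integrable (fun p : ℝ × ℝ => p.1 ^ 2) μ := by
    have := (gauss_integrable_sq ha').mul_prod (integrable_const (1:ℝ)
      (μ := gaussianReal 0 b))
    simpa using this
  have hint2 : Integrable (fun p : ℝ × ℝ => |p.1| * |p.2|) μ :=
    (gauss_integrable_id ha').abs.mul_prod (gauss_integrable_id hb').abs
  have hbound : Integrable (fun p : ℝ × ℝ => p.1 ^ 2 + |p.1| * |p.2|) μ := hint1.add hint2
  have hintf : ∀ g : ℝ × ℝ → ℝ, Continuous g →
      (∀ p : ℝ × ℝ, |g p| ≤ p.1 ^ 2 + |p.1| * |p.2|) → Integrable g μ := by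
    intro g hgc hg
    refine hbound.mono' hgc.aestronglyMeasurable ?_
    filter_upwards with p
    simpa [Real.norm_eq_abs] using hg p
  have hfabs : ∀ p : ℝ × ℝ, |f p| ≤ p.1 ^ 2 + |p.1| * |p.2| := by
    intro p
    have h1 : |f p| = |p.1| * |max (p.1 + p.2) 0| := abs_mul _ _
    have h2 : |max (p.1 + p.2) 0| ≤ |p.1| + |p.2| := by
      rw [abs_of_nonneg (le_max_right _ _)]
      rcases le_total (p.1 + p.2) 0 with h | h
      · rw [max_eq_right h]; positivity
      · rw [max_eq_left h]
        exact le_trans (le_abs_self _) (abs_add_le _ _)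
    calc |f p| = |p.1| * |max (p.1 + p.2) 0| := h1
      _ ≤ |p.1| * (|p.1| + |p.2|) := mul_le_mul_of_nonneg_left h2 (abs_nonneg _)
      _ = p.1 ^ 2 + |p.1| * |p.2| := by rw [← sq_abs p.1]; ring
  have hIf : Integrable f μ := hintf f hfc hfabs
  have hmap : μ.map (fun p : ℝ × ℝ => (-p.1, -p.2)) = μ := by
    have h := Measure.map_prod_map (f := fun x : ℝ => -x) (g := fun x : ℝ => -x)
      (gaussianReal 0 a) (gaussianReal 0 b) measurable_neg measurable_neg
    rw [gauss_map_neg ha', gauss_map_neg hb'] at h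
    have hpm : (fun p : ℝ × ℝ => (-p.1, -p.2))
        = Prod.map (fun x : ℝ => -x) (fun x : ℝ => -x) := rfl
    rw [hμ, hpm, ← h]
  have hsym : ∫ p, f p ∂μ = ∫ p, f (-p.1, -p.2) ∂μ := by
    conv_lhs => rw [← hmap]
    rw [integral_map (show Measurable (fun p : ℝ × ℝ => (-p.1, -p.2)) from measurable_fst.neg.prodMk measurable_snd.neg).aemeasurable
      (by rw [hmap]; exact hfc.aestronglyMeasurable)]
  have hIfneg : Integrable (fun p : ℝ × ℝ => f (-p.1, -p.2)) μ := by
    refine hintf _ ?_ ?_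
    · exact hfc.comp ((continuous_fst.neg).prodMk (continuous_snd.neg))
    · intro p
      have := hfabs (-p.1, -p.2)
      simpa using this
  have hkey : ∀ p : ℝ × ℝ, f p + f (-p.1, -p.2) = p.1 * (p.1 + p.2) := by
    intro p
    rw [hf]
    simp only
    rw [show -p.1 + -p.2 = -(p.1 + p.2) by ring]
    rcases le_total 0 (p.1 + p.2) with h | h
    · rw [max_eq_left h, max_eq_right (by linarith : -(p.1 + p.2) ≤ 0)]
      ring
    · rw [max_eq_right h, max_eq_left (by linarith : (0:ℝ) ≤ -(p.1 + p.2))]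
      ring
  have hsum : ∫ p, f p ∂μ + ∫ p, f (-p.1, -p.2) ∂μ = ∫ p : ℝ × ℝ, p.1 * (p.1 + p.2) ∂μ := by
    rw [← integral_add hIf hIfneg]
    congr 1
    funext p
    exact hkey p
  have hval : ∫ p : ℝ × ℝ, p.1 * (p.1 + p.2) ∂μ = (a : ℝ) := by
    have hexp : (fun p : ℝ × ℝ => p.1 * (p.1 + p.2))
        = fun p : ℝ × ℝ => p.1 ^ 2 * 1 + p.1 * p.2 := by
      funext p; ring
    rw [hexp]
    rw [integral_add (by simpa using hint1) ((gauss_integrable_id ha').mul_prod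
      (gauss_integrable_id hb'))]
    rw [integral_prod_mul (μ := gaussianReal 0 a) (ν := gaussianReal 0 b)
      (f := fun x : ℝ => x ^ 2) (g := fun _ : ℝ => (1:ℝ))]
    rw [integral_prod_mul (μ := gaussianReal 0 a) (ν := gaussianReal 0 b)
      (f := fun x : ℝ => x) (g := fun y : ℝ => y)]
    rw [gauss_integral_sq ha', gauss_integral_id ha']
    simp
  linarith [hsum, hval, hsym]
end

section
/- Let x₁ ~ N(0, a) and x₂ ~ N(0, b) be independent Gaussian random variables with a, b > 0. Then E[x₁²·1_{x₁ ≥ 0}·1_{x₁+x₂ ≥ 0}] = a/4 + (a/(2π))·(arctan(√(a/b)) + √(ab)/(a+b)). -/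
open MeasureTheory ProbabilityTheory Real Set Filter Asymptotics
open scoped NNReal ENNReal Topology


noncomputable def phi (x : ℝ) : ℝ := (Real.sqrt (2 * Real.pi))⁻¹ * Real.exp (-(1/2 : ℝ) * x ^ 2)

lemma phi_eq_pdf (x : ℝ) : phi x = gaussianPDFReal 0 1 x := by
  rw [phi, gaussianPDFReal_def]
  congr 1
  · norm_num
  · congr 1
    push_cast
    ring

lemma phi_nonneg (x : ℝ) : 0 ≤ phi x := by unfold phi; positivity

lemma phi_cont : Continuous phi := by
  unfold phi; fun_prop

lemma phi_neg (x : ℝ) : phi (-x) = phi x := by simp [phi]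

lemma phi_le (x : ℝ) : phi x ≤ (Real.sqrt (2 * Real.pi))⁻¹ := by
  have h : Real.exp (-(1/2:ℝ) * x ^ 2) ≤ 1 := by
    rw [Real.exp_le_one_iff]
    nlinarith [sq_nonneg x]
  calc phi x ≤ (Real.sqrt (2 * Real.pi))⁻¹ * 1 :=
        mul_le_mul_of_nonneg_left h (by positivity)
    _ = _ := mul_one _

lemma integrable_phi : Integrable phi :=
  (integrable_exp_neg_mul_sq (by norm_num : (0:ℝ) < 1/2)).const_mul _
lemma integral_phi : ∫ x, phi x = 1 := by
  unfold phi
  rw [integral_const_mul, integral_gaussian (1/2)]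
  rw [show Real.pi / (1/2) = 2 * Real.pi by ring]
  exact inv_mul_cancel₀ (by positivity)


lemma meas_phi : Measurable phi := by
  have hfe : phi = gaussianPDFReal 0 1 := funext phi_eq_pdf
  rw [hfe]; exact measurable_gaussianPDFReal 0 1

lemma gauss1_eq : gaussianReal 0 1 =
    (volume : Measure ℝ).withDensity (fun x => ((phi x).toNNReal : ℝ≥0∞)) := by
  rw [gaussianReal_of_var_ne_zero _ one_ne_zero]
  congr 1
  funext x
  show ENNReal.ofReal (gaussianPDFReal 0 1 x) = _
  rw [← phi_eq_pdf, ENNReal.ofReal]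

lemma integral_gauss1 (f : ℝ → ℝ) :
    ∫ x, f x ∂(gaussianReal 0 1) = ∫ x, phi x * f x := by
  rw [gauss1_eq, integral_withDensity_eq_integral_smul (meas_phi.real_toNNReal)]
  congr 1 with x
  simp only [NNReal.smul_def, smul_eq_mul]
  rw [Real.coe_toNNReal _ (by unfold phi; positivity)]

lemma integrable_gauss1_iff (f : ℝ → ℝ) :
    Integrable f (gaussianReal 0 1) ↔ Integrable (fun x => phi x * f x) := by
  rw [gauss1_eq, integrable_withDensity_iff_integrable_smul (meas_phi.real_toNNReal)]
  refine integrable_congr (Eventually.of_forall fun x => ?_)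
  simp only [NNReal.smul_def, smul_eq_mul]
  rw [Real.coe_toNNReal _ (by unfold phi; positivity)]


lemma tendsto_pow_gauss (k : ℕ) {c : ℝ} (hc : 0 < c) :
    Tendsto (fun x : ℝ => x ^ k * Real.exp (-(c/2) * x ^ 2)) atTop (𝓝 0) := by
  have h := (rpow_mul_exp_neg_mul_sq_isLittleO_exp_neg (b := c/2) (by positivity)
    (k : ℝ)).tendsto_zero_of_tendsto
      (Real.tendsto_exp_atBot.comp (Tendsto.const_mul_atTop_of_neg (by norm_num : (-(1/2):ℝ) < 0) tendsto_id))
  refine h.congr' ?_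
  filter_upwards [eventually_gt_atTop (0:ℝ)] with x hx
  rw [Real.rpow_natCast]

lemma integrableOn_pow_gauss (n : ℕ) {c : ℝ} (hc : 0 < c) :
    IntegrableOn (fun u : ℝ => u ^ n * Real.exp (-(c/2) * u ^ 2)) (Ioi 0) := by
  have h := integrableOn_rpow_mul_exp_neg_mul_sq (b := c/2) (by positivity)
    (s := (n:ℝ)) (by exact_mod_cast neg_one_lt_zero.trans_le (Nat.cast_nonneg n))
  refine h.congr_fun (fun x hx => ?_) measurableSet_Ioi
  simp only [Real.rpow_natCast]

lemma integrable_abs_pow_gauss (n : ℕ) {c : ℝ} (hc : 0 < c) :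
    Integrable (fun x : ℝ => |x| ^ n * Real.exp (-(c/2) * x ^ 2)) := by
  have hIoi : IntegrableOn (fun x : ℝ => |x| ^ n * Real.exp (-(c/2) * x ^ 2)) (Ioi 0) := by
    refine (integrableOn_pow_gauss n hc).congr_fun (fun x hx => ?_) measurableSet_Ioi
    rw [abs_of_pos hx]
  rw [← integrableOn_univ, ← Iio_union_Ici (a := (0:ℝ)), integrableOn_union,
    integrableOn_Ici_iff_integrableOn_Ioi]
  refine ⟨?_, hIoi⟩
  rw [← (Measure.measurePreserving_neg (volume : Measure ℝ)).integrableOn_comp_preimage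
      (Homeomorph.neg ℝ).measurableEmbedding]
  simpa [Function.comp_def, abs_neg, neg_Iio, neg_zero] using hIoi


lemma integral_Ioi_cube {c : ℝ} (hc : 0 < c) :
    ∫ x in Ioi (0:ℝ), x ^ 3 * Real.exp (-(c/2) * x ^ 2) = 2 / c ^ 2 := by
  have hd : ∀ x ∈ Ici (0:ℝ), HasDerivAt (fun x => -(x^2/c + 2/c^2) * Real.exp (-(c/2) * x^2))
      (x ^ 3 * Real.exp (-(c/2) * x^2)) x := by
    intro x _
    have h1 : HasDerivAt (fun x : ℝ => -(x^2/c + 2/c^2)) (-(2*x/c)) x := by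
      have := (((hasDerivAt_pow 2 x).div_const c).add_const (2/c^2)).neg
      exact this.congr_deriv (by norm_num)
    have hx : HasDerivAt (fun x : ℝ => -(c/2) * x^2) (-(c/2) * (2*x)) x := by
      have := (hasDerivAt_pow 2 x).const_mul (-(c/2))
      exact this.congr_deriv (by norm_num)
    have h2 := hx.exp
    have := h1.mul h2
    refine this.congr_deriv ?_
    field_simp
    ring
  have hint : IntegrableOn (fun x : ℝ => x ^ 3 * Real.exp (-(c/2) * x ^ 2)) (Ioi 0) :=
    integrableOn_pow_gauss 3 hc
  have htend : Tendsto (fun x : ℝ => -(x^2/c + 2/c^2) * Real.exp (-(c/2) * x^2)) atTop (𝓝 0) := by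
    have h := (((tendsto_pow_gauss 2 hc).div_const c).add
      ((tendsto_pow_gauss 0 hc).const_mul (2/c^2))).neg
    simp only [zero_div, mul_zero, add_zero, neg_zero, zero_add] at h
    refine h.congr fun x => ?_
    ring
  have key := integral_Ioi_of_hasDerivAt_of_tendsto' hd hint htend
  rw [key]
  norm_num

lemma integral_Ioi_sq : ∫ x in Ioi (0:ℝ), x ^ 2 * Real.exp (-(1/2:ℝ) * x ^ 2)
    = Real.sqrt (2*Real.pi) / 2 := by
  have hd : ∀ x ∈ Ici (0:ℝ), HasDerivAt (fun x : ℝ => -x * Real.exp (-(1/2:ℝ) * x^2))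
      (x ^ 2 * Real.exp (-(1/2:ℝ) * x^2) - Real.exp (-(1/2:ℝ) * x^2)) x := by
    intro x _
    have h1 : HasDerivAt (fun x : ℝ => -x) (-1 : ℝ) x := (hasDerivAt_id x).neg
    have hx : HasDerivAt (fun x : ℝ => -(1/2:ℝ) * x^2) (-(1/2:ℝ) * (2*x)) x := by
      have := (hasDerivAt_pow 2 x).const_mul (-(1/2:ℝ))
      exact this.congr_deriv (by norm_num)
    have := h1.mul hx.exp
    refine this.congr_deriv ?_
    ring
  have hint : IntegrableOn
      (fun x : ℝ => x ^ 2 * Real.exp (-(1/2:ℝ) * x^2) - Real.exp (-(1/2:ℝ) * x^2)) (Ioi 0) := by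
    have h0' : IntegrableOn (fun u : ℝ => Real.exp (-(1/2:ℝ) * u^2)) (Ioi 0) :=
      (integrableOn_pow_gauss 0 one_pos).congr_fun (fun x _ => by norm_num) measurableSet_Ioi
    exact (integrableOn_pow_gauss 2 one_pos).sub h0'
  have htend : Tendsto (fun x : ℝ => -x * Real.exp (-(1/2:ℝ) * x^2)) atTop (𝓝 0) := by
    have h := (tendsto_pow_gauss 1 one_pos).neg
    rw [neg_zero] at h
    refine h.congr fun x => ?_
    ring
  have key := integral_Ioi_of_hasDerivAt_of_tendsto' hd hint htend
  have key2 : ∫ x in Ioi (0:ℝ),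
      (x ^ 2 * Real.exp (-(1/2:ℝ) * x^2) - Real.exp (-(1/2:ℝ) * x^2)) = 0 := by
    rw [key]; norm_num
  have hsub : ∫ x in Ioi (0:ℝ), (x ^ 2 * Real.exp (-(1/2:ℝ) * x^2) - Real.exp (-(1/2:ℝ) * x^2))
      = (∫ x in Ioi (0:ℝ), x ^ 2 * Real.exp (-(1/2:ℝ) * x^2))
        - ∫ x in Ioi (0:ℝ), Real.exp (-(1/2:ℝ) * x^2) := by
    refine integral_sub (integrableOn_pow_gauss 2 one_pos) ?_
    refine (integrableOn_pow_gauss 0 one_pos).congr_fun (fun x _ => ?_) measurableSet_Ioi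
    norm_num
  have hgauss : ∫ x in Ioi (0:ℝ), Real.exp (-(1/2:ℝ) * x^2) = Real.sqrt (Real.pi / (1/2)) / 2 :=
    integral_gaussian_Ioi (1/2)
  rw [hsub] at key2
  rw [show Real.pi / (1/2:ℝ) = 2 * Real.pi by ring] at hgauss
  linarith [key2, hgauss]


noncomputable def G (t : ℝ) : ℝ := ∫ v, (if 0 ≤ t + v then (1:ℝ) else 0) ∂(gaussianReal 0 1)

lemma G_eq (t : ℝ) : G t = ∫ v in Iic t, phi v := by
  rw [G, integral_gauss1]
  have : (fun v => phi v * if 0 ≤ t + v then (1:ℝ) else 0)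
      = Set.indicator (Ici (-t)) phi := by
    funext v
    by_cases h : 0 ≤ t + v
    · rw [if_pos h, mul_one, Set.indicator_of_mem (by simp [mem_Ici]; linarith)]
    · rw [if_neg h, mul_zero, Set.indicator_of_notMem (by simp only [mem_Ici, not_le]; push_neg at h; linarith)]
  rw [this, integral_indicator measurableSet_Ici, integral_Ici_eq_integral_Ioi]
  have := integral_comp_neg_Ioi (c := -t) phi
  rw [neg_neg] at this
  rw [← this]
  congr 1 with x
  exact (phi_neg x).symm

lemma G_hasDeriv (t : ℝ) : HasDerivAt G (phi t) t := by
  have key : ∀ s : ℝ, G s = (∫ v in Iic (0:ℝ), phi v) + ∫ v in (0:ℝ)..s, phi v := by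
    intro s
    rw [G_eq]
    have := intervalIntegral.integral_Iic_sub_Iic (f := phi) (μ := volume)
      (integrable_phi.integrableOn) (integrable_phi.integrableOn) (a := 0) (b := s)
    linarith [this]
  have h2 : HasDerivAt (fun s => (∫ v in Iic (0:ℝ), phi v) + ∫ v in (0:ℝ)..s, phi v)
      (phi t) t := by
    refine HasDerivAt.const_add _ ?_
    exact intervalIntegral.integral_hasDerivAt_right
      (phi_cont.intervalIntegrable _ _)
      (phi_cont.stronglyMeasurableAtFilter _ _)
      phi_cont.continuousAt
  exact h2.congr_deriv rfl |>.congr_of_eventuallyEq (Eventually.of_forall fun s => (key s))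


lemma G_cont : Continuous G := by
  have : Differentiable ℝ G := fun t => (G_hasDeriv t).differentiableAt
  exact this.continuous

lemma G_nonneg (t : ℝ) : 0 ≤ G t := by
  rw [G_eq]
  exact setIntegral_nonneg measurableSet_Iic fun x _ => phi_nonneg x

lemma G_le_one (t : ℝ) : G t ≤ 1 := by
  rw [G_eq, ← integral_phi]
  exact setIntegral_le_integral integrable_phi (Eventually.of_forall phi_nonneg)

lemma G_zero : G 0 = 1/2 := by
  have hsym : ∫ v in Ioi (0:ℝ), phi v = ∫ v in Iic (0:ℝ), phi v := by
    have h := integral_comp_neg_Ioi (c := (0:ℝ)) phi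
    rw [neg_zero] at h
    rw [← h]
    congr 1 with x
    exact (phi_neg x).symm
  have hadd : (∫ v in Iic (0:ℝ), phi v) + ∫ v in Ioi (0:ℝ), phi v = ∫ v, phi v :=
    intervalIntegral.integral_Iic_add_Ioi integrable_phi.integrableOn integrable_phi.integrableOn
  rw [integral_phi] at hadd
  rw [G_eq]
  linarith

lemma ind_meas : Measurable (fun u : ℝ => if 0 ≤ u then (1:ℝ) else 0) :=
  Measurable.ite (measurableSet_le measurable_const measurable_id) measurable_const
    measurable_const

lemma ind_nonneg (u : ℝ) : 0 ≤ (if 0 ≤ u then (1:ℝ) else 0) := by positivity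

lemma ind_le_one (u : ℝ) : (if 0 ≤ u then (1:ℝ) else 0) ≤ 1 := by
  split <;> norm_num

lemma integrable_aux {f : ℝ → ℝ} (hm : AEStronglyMeasurable f (gaussianReal 0 1)) (n : ℕ)
    (C : ℝ) (h : ∀ x, ‖f x‖ ≤ C * |x| ^ n) : Integrable f (gaussianReal 0 1) := by
  refine Integrable.mono' ?_ hm (Eventually.of_forall h)
  rw [integrable_gauss1_iff]
  have h2 := (integrable_abs_pow_gauss n one_pos).const_mul (C * (Real.sqrt (2 * Real.pi))⁻¹)
  refine h2.congr (Eventually.of_forall fun x => ?_)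
  unfold phi
  ring

noncomputable def H (l : ℝ) : ℝ :=
  ∫ u, u ^ 2 * (if 0 ≤ u then (1:ℝ) else 0) * G (l * u) ∂(gaussianReal 0 1)

lemma integral_F' (l : ℝ) :
    ∫ u, u ^ 2 * (if 0 ≤ u then (1:ℝ) else 0) * (phi (l * u) * u) ∂(gaussianReal 0 1)
      = (2 * Real.pi)⁻¹ * (2 / (1 + l ^ 2) ^ 2) := by
  rw [integral_gauss1]
  have hrw : (fun u => phi u * (u ^ 2 * (if 0 ≤ u then (1:ℝ) else 0) * (phi (l*u) * u)))
      = Set.indicator (Ici (0:ℝ))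
        (fun u => (2*Real.pi)⁻¹ * (u ^ 3 * Real.exp (-((1+l^2)/2) * u^2))) := by
    funext u
    by_cases h : 0 ≤ u
    · rw [if_pos h, Set.indicator_of_mem (mem_Ici.2 h)]
      have hs : (Real.sqrt (2*Real.pi))⁻¹ * (Real.sqrt (2*Real.pi))⁻¹ = (2*Real.pi)⁻¹ := by
        rw [← mul_inv, Real.mul_self_sqrt (by positivity)]
      have he : Real.exp (-(1/2:ℝ)*u^2) * Real.exp (-(1/2:ℝ)*(l*u)^2)
          = Real.exp (-((1+l^2)/2) * u^2) := by
        rw [← Real.exp_add]; congr 1; ring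
      have hexpand : phi u * (u^2 * (phi (l*u) * u))
          = ((Real.sqrt (2*Real.pi))⁻¹ * (Real.sqrt (2*Real.pi))⁻¹)
            * (Real.exp (-(1/2:ℝ)*u^2) * Real.exp (-(1/2:ℝ)*(l*u)^2)) * u^3 := by
        unfold phi; ring
      rw [mul_one, hexpand, hs, he]
      ring
    · rw [if_neg h, Set.indicator_of_notMem (by simpa [mem_Ici] using h)]
      ring
  rw [hrw, integral_indicator measurableSet_Ici, integral_Ici_eq_integral_Ioi,
    integral_const_mul, integral_Ioi_cube (show (0:ℝ) < 1 + l^2 by positivity)]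

lemma H_hasDeriv (l₀ : ℝ) :
    HasDerivAt H ((2 * Real.pi)⁻¹ * (2 / (1 + l₀ ^ 2) ^ 2)) l₀ := by
  have main := hasDerivAt_integral_of_dominated_loc_of_deriv_le
    (μ := gaussianReal 0 1) (x₀ := l₀) (s := Metric.ball l₀ 1)
    (F := fun l u => u ^ 2 * (if 0 ≤ u then (1:ℝ) else 0) * G (l * u))
    (F' := fun l u => u ^ 2 * (if 0 ≤ u then (1:ℝ) else 0) * (phi (l * u) * u))
    (bound := fun u => (Real.sqrt (2 * Real.pi))⁻¹ * |u| ^ 3)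
    (Metric.ball_mem_nhds l₀ one_pos)
    (Eventually.of_forall fun l => by
      refine Measurable.aestronglyMeasurable ?_
      exact ((measurable_id.pow_const 2).mul ind_meas).mul
        (G_cont.measurable.comp (measurable_const.mul measurable_id)))
    (integrable_aux (by
      refine Measurable.aestronglyMeasurable ?_
      exact ((measurable_id.pow_const 2).mul ind_meas).mul
        (G_cont.measurable.comp (measurable_const.mul measurable_id))) 2 1 (fun x => by
      rw [one_mul, Real.norm_eq_abs, abs_mul, abs_mul]
      have h1 : |x ^ 2| = |x| ^ 2 := abs_pow x 2
      have h2 : |if 0 ≤ x then (1:ℝ) else 0| ≤ 1 := by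
        rw [abs_of_nonneg (ind_nonneg x)]; exact ind_le_one x
      have h3 : |G (l₀ * x)| ≤ 1 := by
        rw [abs_of_nonneg (G_nonneg _)]; exact G_le_one _
      calc |x ^ 2| * |if 0 ≤ x then (1:ℝ) else 0| * |G (l₀ * x)|
          ≤ |x ^ 2| * 1 * 1 := by
            apply mul_le_mul (mul_le_mul le_rfl h2 (abs_nonneg _) (abs_nonneg _)) h3
              (abs_nonneg _) (by positivity)
        _ = |x| ^ 2 := by rw [h1]; ring))
    (by
      refine Measurable.aestronglyMeasurable ?_
      exact ((measurable_id.pow_const 2).mul ind_meas).mul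
        ((phi_cont.measurable.comp (measurable_const.mul measurable_id)).mul measurable_id))
    (Eventually.of_forall fun u => by
      intro x _
      rw [Real.norm_eq_abs, abs_mul, abs_mul, abs_mul, abs_pow]
      have h2 : |if 0 ≤ u then (1:ℝ) else 0| ≤ 1 := by
        rw [abs_of_nonneg (ind_nonneg u)]; exact ind_le_one u
      have h3 : |phi (x*u)| ≤ (Real.sqrt (2 * Real.pi))⁻¹ := by
        rw [abs_of_nonneg (phi_nonneg _)]; exact phi_le _
      calc |u| ^ 2 * |if 0 ≤ u then (1:ℝ) else 0| * (|phi (x*u)| * |u|)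
          ≤ |u| ^ 2 * 1 * ((Real.sqrt (2 * Real.pi))⁻¹ * |u|) := by
            apply mul_le_mul (mul_le_mul le_rfl h2 (abs_nonneg _) (by positivity))
              (mul_le_mul h3 le_rfl (abs_nonneg _) (by positivity)) (by positivity) (by positivity)
        _ = (Real.sqrt (2 * Real.pi))⁻¹ * |u| ^ 3 := by ring)
    (by
      rw [integrable_gauss1_iff]
      have h := (integrable_abs_pow_gauss 3 one_pos).const_mul
        ((Real.sqrt (2 * Real.pi))⁻¹ * (Real.sqrt (2 * Real.pi))⁻¹)
      refine h.congr (Eventually.of_forall fun x => ?_)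
      unfold phi
      ring)
    (Eventually.of_forall fun u => by
      intro x _
      have hG : HasDerivAt (fun l : ℝ => G (l * u)) (phi (x * u) * u) x :=
        by
          have h := (G_hasDeriv (x * u)).comp x (hasDerivAt_mul_const (x := x) u)
          exact h
      exact hG.const_mul _)
  have h2 := main.2
  rw [integral_F' l₀] at h2
  exact h2


lemma H_zero : H 0 = 1/4 := by
  rw [H]
  have h1 : ∀ u : ℝ, u ^ 2 * (if 0 ≤ u then (1:ℝ) else 0) * G (0 * u)
      = u ^ 2 * (if 0 ≤ u then (1:ℝ) else 0) * (1/2) := by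
    intro u; rw [zero_mul, G_zero]
  simp only [h1]
  rw [integral_gauss1]
  have hrw : (fun u => phi u * (u ^ 2 * (if 0 ≤ u then (1:ℝ) else 0) * (1/2)))
      = Set.indicator (Ici (0:ℝ))
        (fun u => ((Real.sqrt (2*Real.pi))⁻¹ / 2) * (u ^ 2 * Real.exp (-(1/2:ℝ) * u^2))) := by
    funext u
    by_cases h : 0 ≤ u
    · rw [if_pos h, Set.indicator_of_mem (mem_Ici.2 h)]
      unfold phi; ring
    · rw [if_neg h, Set.indicator_of_notMem (by simpa [mem_Ici] using h)]
      ring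
  rw [hrw, integral_indicator measurableSet_Ici, integral_Ici_eq_integral_Ioi,
    integral_const_mul, integral_Ioi_sq]
  rw [div_mul_div_comm, inv_mul_cancel₀ (by positivity)]
  norm_num

lemma H_eq (l : ℝ) : H l = 1/4 + (2 * Real.pi)⁻¹ * (Real.arctan l + l / (1 + l ^ 2)) := by
  set R : ℝ → ℝ := fun y => 1/4 + (2 * Real.pi)⁻¹ * (Real.arctan y + y / (1 + y ^ 2)) with hR
  have hRd : ∀ x : ℝ, HasDerivAt R ((2 * Real.pi)⁻¹ * (2 / (1 + x ^ 2) ^ 2)) x := by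
    intro x
    have h1 : HasDerivAt Real.arctan (1 / (1 + x ^ 2)) x := Real.hasDerivAt_arctan x
    have h2 : HasDerivAt (fun y : ℝ => y / (1 + y ^ 2))
        ((1 * (1 + x ^ 2) - x * (2 * x)) / (1 + x ^ 2) ^ 2) x := by
      have hd := (hasDerivAt_id x).div ((hasDerivAt_pow 2 x).const_add 1)
        (by positivity)
      exact hd.congr_deriv (by norm_num)
    have h3 := ((h1.add h2).const_mul ((2 * Real.pi)⁻¹)).const_add (1/4)
    refine h3.congr_deriv ?_
    have hpos : (0:ℝ) < 1 + x ^ 2 := by positivity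
    field_simp
    ring
  have hdiff : ∀ x : ℝ, HasDerivAt (fun y => H y - R y) 0 x := by
    intro x
    exact ((H_hasDeriv x).sub (hRd x)).congr_deriv (sub_self _)
  have hconst := is_const_of_deriv_eq_zero
    (f := fun y => H y - R y) (fun x => (hdiff x).differentiableAt)
    (fun x => (hdiff x).deriv) l 0
  have hR0 : R 0 = 1/4 := by simp [hR]
  have := H_zero
  have : H l - R l = H 0 - R 0 := hconst
  rw [H_zero, hR0] at this
  have h4 : H l = R l := by linear_combination this
  rw [h4]


lemma gauss_map (c : ℝ≥0) (hc : c ≠ 0) :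
    (gaussianReal 0 1).map (fun x => Real.sqrt c * x) = gaussianReal 0 c := by
  have h := gaussianReal_map_const_mul (μ := 0) (v := 1) (Real.sqrt c)
  have h2 : (⟨(Real.sqrt c) ^ 2, sq_nonneg _⟩ : ℝ≥0) * 1 = c := by
    ext
    simp [Real.sq_sqrt c.coe_nonneg]
  rw [mul_zero] at h
  rw [h]; exact congrArg (gaussianReal 0) h2

theorem gaussian_sq_indicator_moment (a b : ℝ≥0) (ha : 0 < a) (hb : 0 < b) :
    ∫ p : ℝ × ℝ,
        p.1 ^ 2 * (if 0 ≤ p.1 then (1:ℝ) else 0) *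
          (if 0 ≤ p.1 + p.2 then (1:ℝ) else 0)
        ∂((gaussianReal 0 a).prod (gaussianReal 0 b))
      = (a : ℝ) / 4 + ((a : ℝ) / (2 * Real.pi)) *
          (Real.arctan (Real.sqrt ((a : ℝ) / (b : ℝ))) +
            Real.sqrt ((a : ℝ) * (b : ℝ)) / ((a : ℝ) + (b : ℝ))) := by
  have haR : (0:ℝ) < (a:ℝ) := ha
  have hbR : (0:ℝ) < (b:ℝ) := hb
  set sa := Real.sqrt a with hsa
  set sb := Real.sqrt b with hsb
  have hsa0 : 0 < sa := Real.sqrt_pos.2 haR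
  have hsb0 : 0 < sb := Real.sqrt_pos.2 hbR
  have hsa2 : sa ^ 2 = (a:ℝ) := Real.sq_sqrt haR.le
  have hsb2 : sb ^ 2 = (b:ℝ) := Real.sq_sqrt hbR.le
  have hmapa := gauss_map a ha.ne'
  have hmapb := gauss_map b hb.ne'
  -- measurability of the integrand
  have hmeas : Measurable fun p : ℝ × ℝ =>
      p.1 ^ 2 * (if 0 ≤ p.1 then (1:ℝ) else 0) * (if 0 ≤ p.1 + p.2 then (1:ℝ) else 0) := by
    refine (((measurable_fst.pow_const 2).mul (ind_meas.comp measurable_fst)).mul ?_)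
    exact Measurable.ite (measurableSet_le measurable_const (measurable_fst.add measurable_snd))
      measurable_const measurable_const
  -- integrable (fun x => x^2) wrt gaussianReal 0 a
  have hsq : Integrable (fun x : ℝ => x ^ 2) (gaussianReal 0 a) := by
    rw [← hmapa, integrable_map_measure (by fun_prop) (by fun_prop)]
    have : Integrable (fun u : ℝ => u ^ 2) (gaussianReal 0 1) := by
      refine integrable_aux (by fun_prop) 2 1 fun x => ?_
      rw [one_mul, Real.norm_eq_abs, abs_pow]
    have h2 := this.const_mul ((Real.sqrt a) ^ 2)
    simpa [Function.comp_def, mul_pow, Real.sq_sqrt (le_of_lt haR)] using h2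
  -- integrability on the product
  have hint : Integrable (fun p : ℝ × ℝ =>
      p.1 ^ 2 * (if 0 ≤ p.1 then (1:ℝ) else 0) * (if 0 ≤ p.1 + p.2 then (1:ℝ) else 0))
      ((gaussianReal 0 a).prod (gaussianReal 0 b)) := by
    refine (integrable_prod_iff hmeas.aestronglyMeasurable).2 ⟨?_, ?_⟩
    · refine Eventually.of_forall fun x => ?_
      refine Integrable.mono' (integrable_const (x ^ 2))
        (by
          refine Measurable.aestronglyMeasurable ?_
          change Measurable fun y : ℝ =>
            (x ^ 2 * if 0 ≤ x then (1:ℝ) else 0) * if 0 ≤ x + y then (1:ℝ) else 0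
          exact (Measurable.ite (measurableSet_le measurable_const
            (measurable_const.add measurable_id)) measurable_const
            measurable_const).const_mul _) ?_
      refine Eventually.of_forall fun y => ?_
      rw [Real.norm_eq_abs, abs_mul, abs_mul]
      have h2 : |if 0 ≤ x then (1:ℝ) else 0| ≤ 1 := by split <;> norm_num
      have h3 : |if 0 ≤ x + y then (1:ℝ) else 0| ≤ 1 := by split <;> norm_num
      calc |x ^ 2| * |if 0 ≤ x then (1:ℝ) else 0| * |if 0 ≤ x + y then (1:ℝ) else 0|
          ≤ |x ^ 2| * 1 * 1 :=
            mul_le_mul (mul_le_mul le_rfl h2 (abs_nonneg _) (abs_nonneg _)) h3 (abs_nonneg _)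
              (by positivity)
        _ = x ^ 2 := by rw [mul_one, mul_one, abs_of_nonneg (sq_nonneg x)]
    · refine Integrable.mono' hsq
        (hmeas.norm.aestronglyMeasurable.integral_prod_right') ?_
      refine Eventually.of_forall fun x => ?_
      have hb1 : ∀ y : ℝ, ‖x ^ 2 * (if 0 ≤ x then (1:ℝ) else 0) * (if 0 ≤ x + y then (1:ℝ) else 0)‖
          ≤ x ^ 2 := by
        intro y
        rw [Real.norm_eq_abs, abs_mul, abs_mul]
        have h2 : |if 0 ≤ x then (1:ℝ) else 0| ≤ 1 := by split <;> norm_num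
        have h3 : |if 0 ≤ x + y then (1:ℝ) else 0| ≤ 1 := by split <;> norm_num
        calc |x ^ 2| * |if 0 ≤ x then (1:ℝ) else 0| * |if 0 ≤ x + y then (1:ℝ) else 0|
            ≤ |x ^ 2| * 1 * 1 :=
              mul_le_mul (mul_le_mul le_rfl h2 (abs_nonneg _) (abs_nonneg _)) h3 (abs_nonneg _)
                (by positivity)
          _ = x ^ 2 := by rw [mul_one, mul_one, abs_of_nonneg (sq_nonneg x)]
      have : ‖∫ y, ‖x ^ 2 * (if 0 ≤ x then (1:ℝ) else 0) *
          (if 0 ≤ x + y then (1:ℝ) else 0)‖ ∂(gaussianReal 0 b)‖ ≤ x ^ 2 := by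
        refine (norm_integral_le_integral_norm _).trans ?_
        simp only [norm_norm]
        calc ∫ y, ‖x ^ 2 * (if 0 ≤ x then (1:ℝ) else 0) *
              (if 0 ≤ x + y then (1:ℝ) else 0)‖ ∂(gaussianReal 0 b)
            ≤ ∫ _, x ^ 2 ∂(gaussianReal 0 b) := by
              refine integral_mono_of_nonneg (Eventually.of_forall fun y => norm_nonneg _)
                (integrable_const _) (Eventually.of_forall hb1)
          _ = x ^ 2 := by simp
      exact this
  -- Fubini
  rw [integral_prod _ hint]
  -- inner integral
  have hinner : ∀ x : ℝ, (∫ y, x ^ 2 * (if 0 ≤ x then (1:ℝ) else 0) *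
      (if 0 ≤ x + y then (1:ℝ) else 0) ∂(gaussianReal 0 b))
      = x ^ 2 * (if 0 ≤ x then (1:ℝ) else 0) * G (x / sb) := by
    intro x
    rw [integral_const_mul]
    congr 1
    rw [← hmapb, integral_map (by fun_prop) (by
      refine Measurable.aestronglyMeasurable ?_
      exact Measurable.ite (measurableSet_le measurable_const
        (measurable_const.add measurable_id)) measurable_const measurable_const)]
    rw [G]
    congr 1 with v
    have hiff : 0 ≤ x + sb * v ↔ 0 ≤ x / sb + v := by
      have hx : x + sb * v = sb * (x / sb + v) := by
        field_simp
      rw [hx, mul_nonneg_iff_of_pos_left hsb0]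
    rw [if_congr hiff rfl rfl]
  simp only [hinner]
  -- outer map
  rw [← hmapa, integral_map (by fun_prop) (by
    refine Measurable.aestronglyMeasurable ?_
    exact ((measurable_id.pow_const 2).mul ind_meas).mul
      (G_cont.measurable.comp (measurable_id.div_const sb)))]
  have houter : ∀ u : ℝ, (sa * u) ^ 2 * (if 0 ≤ sa * u then (1:ℝ) else 0) * G (sa * u / sb)
      = (a:ℝ) * (u ^ 2 * (if 0 ≤ u then (1:ℝ) else 0) * G ((sa / sb) * u)) := by
    intro u
    have h1 : (0 ≤ sa * u) = (0 ≤ u) := by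
      rw [eq_iff_iff]
      exact mul_nonneg_iff_of_pos_left hsa0
    have h2 : sa * u / sb = (sa / sb) * u := by ring
    simp only [h1, h2]
    rw [mul_pow, hsa2]
    ring
  rw [← hsa]
  simp only [houter]
  rw [integral_const_mul]
  have hHdef : (∫ u, u ^ 2 * (if 0 ≤ u then (1:ℝ) else 0) * G ((sa / sb) * u)
      ∂(gaussianReal 0 1)) = H (sa / sb) := rfl
  rw [hHdef, H_eq]
  -- numeric identities
  have hl1 : Real.sqrt ((a:ℝ) / (b:ℝ)) = sa / sb := Real.sqrt_div haR.le _
  have hl2 : (sa / sb) / (1 + (sa / sb) ^ 2) = Real.sqrt ((a:ℝ) * (b:ℝ)) / ((a:ℝ) + (b:ℝ)) := by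
    rw [Real.sqrt_mul haR.le, div_pow, hsa2, hsb2, ← hsa, ← hsb, ← hsa2, ← hsb2]
    have h1 : sb ≠ 0 := hsb0.ne'
    have h2 : sa ^ 2 + sb ^ 2 ≠ 0 := by positivity
    field_simp
    ring
  rw [hl1, hl2]
  field_simp
end

section
/- Let x₁ ~ N(0, a) and x₂ ~ N(0, b) be independent centered Gaussians with a, b > 0. Then E[x₁·x₂·1_{x₁ ≥ 0}·1_{x₁+x₂ ≥ 0}] = b√(ab)/(2π(a+b)). -/
open MeasureTheory ProbabilityTheory Real Filter Set
open scoped NNReal ENNReal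

private lemma aux_deriv_int (c : ℝ) (hc : 0 < c) (t : ℝ) :
    ∫ x in Set.Ioi t, x * Real.exp (-c * x ^ 2) = (2 * c)⁻¹ * Real.exp (-c * t ^ 2) := by
  have hc' : c ≠ 0 := hc.ne'
  have A : ∀ x : ℝ, HasDerivAt (fun y : ℝ => -(2 * c)⁻¹ * Real.exp (-c * y ^ 2))
      (x * Real.exp (-c * x ^ 2)) x := by
    intro x
    refine (((hasDerivAt_pow 2 x).const_mul (-c)).exp.const_mul (-(2 * c)⁻¹)).congr_deriv ?_
    field_simp
    ring
  have B : Tendsto (fun y : ℝ => -(2 * c)⁻¹ * Real.exp (-c * y ^ 2)) atTop (nhds 0) := by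
    rw [show (0 : ℝ) = -(2 * c)⁻¹ * 0 by ring]
    refine Tendsto.const_mul _ (Real.tendsto_exp_atBot.comp ?_)
    exact (tendsto_pow_atTop two_ne_zero).const_mul_atTop_of_neg (neg_lt_zero.2 hc)
  rw [integral_Ioi_of_hasDerivAt_of_tendsto' (fun x _ => A x)
    ((integrable_mul_exp_neg_mul_sq hc).integrableOn) B]
  ring

private lemma pdf0 (v : ℝ≥0) (x : ℝ) :
    gaussianPDFReal 0 v x = (Real.sqrt (2 * π * v))⁻¹ * Real.exp (-(2 * (v : ℝ))⁻¹ * x ^ 2) := by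
  rw [gaussianPDFReal]
  congr 1
  rw [sub_zero]
  ring

private lemma key (μ : ℝ) {v : ℝ≥0} (hv : v ≠ 0) (g : ℝ → ℝ) :
    ∫ x, g x ∂gaussianReal μ v = ∫ x, gaussianPDFReal μ v x * g x := by
  have hd : gaussianReal μ v
      = volume.withDensity (fun x => ((gaussianPDFReal μ v x).toNNReal : ℝ≥0∞)) := by
    rw [gaussianReal_of_var_ne_zero _ hv]; rfl
  rw [hd, integral_withDensity_eq_integral_smul (measurable_gaussianPDFReal μ v).real_toNNReal]
  congr 1
  ext x
  simp [NNReal.smul_def, Real.coe_toNNReal _ (gaussianPDFReal_nonneg μ v x)]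

private lemma key_int {v : ℝ≥0} (hv : v ≠ 0) (g : ℝ → ℝ) :
    Integrable g (gaussianReal 0 v) ↔
      Integrable (fun x => gaussianPDFReal 0 v x * g x) volume := by
  have hd : gaussianReal 0 v
      = volume.withDensity (fun x => ((gaussianPDFReal 0 v x).toNNReal : ℝ≥0∞)) := by
    rw [gaussianReal_of_var_ne_zero _ hv]; rfl
  rw [hd, integrable_withDensity_iff_integrable_smul (measurable_gaussianPDFReal 0 v).real_toNNReal]
  constructor <;> intro h <;> refine h.congr (Filter.Eventually.of_forall fun x => ?_) <;>
    simp [NNReal.smul_def, Real.coe_toNNReal _ (gaussianPDFReal_nonneg 0 v x)]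

private lemma int_id {v : ℝ≥0} (hv : 0 < v) : Integrable (fun x : ℝ => x) (gaussianReal 0 v) := by
  rw [key_int hv.ne' ]
  have hc : 0 < (2 * (v : ℝ))⁻¹ := by positivity
  have := (integrable_mul_exp_neg_mul_sq hc).const_mul (Real.sqrt (2 * π * (v : ℝ)))⁻¹
  refine this.congr (Filter.Eventually.of_forall fun x => ?_)
  simp only [pdf0]
  ring

private lemma inner_int {v : ℝ≥0} (hv : 0 < v) (t : ℝ) :
    ∫ y, y * (if 0 ≤ t + y then (1 : ℝ) else 0) ∂gaussianReal 0 v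
      = (v : ℝ) * gaussianPDFReal 0 v t := by
  have hv' : (0:ℝ) < v := hv
  have hc : 0 < (2 * (v : ℝ))⁻¹ := by positivity
  rw [key 0 hv.ne']
  have heq : (fun y => gaussianPDFReal 0 v y * (y * (if 0 ≤ t + y then (1:ℝ) else 0)))
      = Set.indicator (Set.Ici (-t)) (fun y => gaussianPDFReal 0 v y * y) := by
    ext y
    rw [Set.indicator_apply]
    by_cases h : 0 ≤ t + y
    · rw [if_pos h, if_pos (by rwa [Set.mem_Ici, neg_le_iff_add_nonneg, add_comm])]
      ring
    · rw [if_neg h, if_neg (by rwa [Set.mem_Ici, neg_le_iff_add_nonneg, add_comm])]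
      ring
  rw [heq, integral_indicator measurableSet_Ici, integral_Ici_eq_integral_Ioi]
  have heq2 : ∀ y : ℝ, gaussianPDFReal 0 v y * y
      = (Real.sqrt (2 * π * v))⁻¹ * (y * Real.exp (-(2 * (v:ℝ))⁻¹ * y ^ 2)) := by
    intro y; rw [pdf0]; ring
  simp_rw [heq2]
  rw [integral_const_mul _ _, aux_deriv_int _ hc, neg_sq, pdf0]
  have h2 : (2 * (2 * (v : ℝ))⁻¹)⁻¹ = (v : ℝ) := by
    field_simp
  rw [h2]
  ring

theorem gaussian_cross_indicator_moment (a b : ℝ≥0) (ha : 0 < a) (hb : 0 < b) :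
    ∫ p : ℝ × ℝ,
        p.1 * p.2 * (if 0 ≤ p.1 then (1:ℝ) else 0) *
          (if 0 ≤ p.1 + p.2 then (1:ℝ) else 0)
        ∂((gaussianReal 0 a).prod (gaussianReal 0 b))
      = (b : ℝ) * Real.sqrt ((a : ℝ) * (b : ℝ)) /
          (2 * Real.pi * ((a : ℝ) + (b : ℝ))) := by
  have hA : (0:ℝ) < a := ha
  have hB : (0:ℝ) < b := hb
  set f : ℝ × ℝ → ℝ := fun p =>
    p.1 * p.2 * (if 0 ≤ p.1 then (1:ℝ) else 0) * (if 0 ≤ p.1 + p.2 then (1:ℝ) else 0) with hf_def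
  have hmeas : AEStronglyMeasurable f ((gaussianReal 0 a).prod (gaussianReal 0 b)) := by
    apply Measurable.aestronglyMeasurable
    apply Measurable.mul
    apply Measurable.mul
    · exact measurable_fst.mul measurable_snd
    · exact Measurable.ite (measurableSet_le measurable_const measurable_fst)
        measurable_const measurable_const
    · exact Measurable.ite (measurableSet_le measurable_const (measurable_fst.add measurable_snd))
        measurable_const measurable_const
  have hbound : Integrable (fun p : ℝ × ℝ => |p.1| * |p.2|)
      ((gaussianReal 0 a).prod (gaussianReal 0 b)) :=
    (int_id ha).abs.mul_prod (int_id hb).abs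
  have hint : Integrable f ((gaussianReal 0 a).prod (gaussianReal 0 b)) := by
    refine hbound.mono' hmeas (Filter.Eventually.of_forall fun p => ?_)
    rw [hf_def]
    simp only [Real.norm_eq_abs, abs_mul]
    have h1 : |if 0 ≤ p.1 then (1:ℝ) else 0| ≤ 1 := by split <;> simp
    have h2 : |if 0 ≤ p.1 + p.2 then (1:ℝ) else 0| ≤ 1 := by split <;> simp
    calc |p.1| * |p.2| * |if 0 ≤ p.1 then (1:ℝ) else 0| * |if 0 ≤ p.1 + p.2 then (1:ℝ) else 0|
        ≤ |p.1| * |p.2| * 1 * 1 := by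
          gcongr
      _ = |p.1| * |p.2| := by ring
  rw [MeasureTheory.integral_prod f hint]
  have hinner : ∀ x : ℝ,
      (∫ y, f (x, y) ∂gaussianReal 0 b)
        = (x * (if 0 ≤ x then (1:ℝ) else 0)) * ((b : ℝ) * gaussianPDFReal 0 b x) := by
    intro x
    have : ∀ y : ℝ, f (x, y)
        = (x * (if 0 ≤ x then (1:ℝ) else 0)) * (y * (if 0 ≤ x + y then (1:ℝ) else 0)) := by
      intro y; rw [hf_def]; ring
    simp_rw [this]
    rw [integral_const_mul _ _, inner_int hb x]
  simp_rw [hinner]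
  rw [key 0 ha.ne']
  -- now a Lebesgue integral
  set cA : ℝ := (2 * (a : ℝ))⁻¹ with hcA
  set cB : ℝ := (2 * (b : ℝ))⁻¹ with hcB
  have hcA0 : 0 < cA := by positivity
  have hcB0 : 0 < cB := by positivity
  have heq : (fun x => gaussianPDFReal 0 a x *
        ((x * (if 0 ≤ x then (1:ℝ) else 0)) * ((b : ℝ) * gaussianPDFReal 0 b x)))
      = Set.indicator (Set.Ici (0:ℝ)) (fun x =>
          ((b:ℝ) * ((Real.sqrt (2 * π * a))⁻¹ * (Real.sqrt (2 * π * b))⁻¹))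
            * (x * Real.exp (-(cA + cB) * x ^ 2))) := by
    ext x
    rw [Set.indicator_apply]
    by_cases h : 0 ≤ x
    · rw [if_pos h, if_pos (Set.mem_Ici.mpr h), pdf0, pdf0]
      rw [show -(cA + cB) * x ^ 2 = (-cA * x ^ 2) + (-cB * x ^ 2) by ring, Real.exp_add]
      ring
    · rw [if_neg h, if_neg (fun hx => h (Set.mem_Ici.mp hx))]
      ring
  rw [heq, integral_indicator measurableSet_Ici, integral_Ici_eq_integral_Ioi,
    integral_const_mul _ _, aux_deriv_int _ (by positivity) 0]
  -- algebra
  have hexp0 : Real.exp (-(cA + cB) * 0 ^ 2) = 1 := by norm_num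
  rw [hexp0, mul_one]
  have hs : Real.sqrt (2 * π * a) * Real.sqrt (2 * π * b) = 2 * π * Real.sqrt ((a:ℝ) * b) := by
    rw [← Real.sqrt_mul (by positivity), show (2 * π * (a:ℝ)) * (2 * π * (b:ℝ))
        = (2 * π) ^ 2 * ((a:ℝ) * b) by ring, Real.sqrt_mul (by positivity),
      Real.sqrt_sq (by positivity)]
  have hs2 : Real.sqrt ((a:ℝ) * b) ^ 2 = (a:ℝ) * b := Real.sq_sqrt (by positivity)
  have hs0 : 0 < Real.sqrt ((a:ℝ) * b) := Real.sqrt_pos.mpr (by positivity)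
  have hc2 : (2 * (cA + cB))⁻¹ = (a:ℝ) * b / ((a:ℝ) + b) := by
    rw [hcA, hcB]
    rw [show (2:ℝ) * ((2 * (a:ℝ))⁻¹ + (2 * (b:ℝ))⁻¹) = ((a:ℝ) + b) / ((a:ℝ) * b) by
      field_simp; ring_nf]
    rw [inv_div]
  rw [hc2]
  have hpi : 0 < π := Real.pi_pos
  set s := Real.sqrt ((a:ℝ) * b) with hs_def
  rw [← mul_inv, hs, ← hs2]
  have h1 : (2 * π * s) ≠ 0 := by positivity
  have h2 : ((a:ℝ) + b) ≠ 0 := by positivity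
  field_simp
end

section
/- Let x₁ ~ N(0, a) and x₂ ~ N(0, b) be independent centered Gaussians with a, b > 0, and σ the ReLU function. Then E[(x₁+x₂)·σ(x₁)·σ'(x₁+x₂)] = a/4 + (a/(2π))·arctan(√(a/b)) + √(ab)/(2π). -/
set_option maxHeartbeats 1000000

open MeasureTheory ProbabilityTheory Real Set Filter
open scoped NNReal


lemma tendsto_exp_neg_mul_sq' {k : ℝ} (hk : 0 < k) :
    Tendsto (fun x : ℝ => Real.exp (-k * x ^ 2)) atTop (nhds 0) := by
  have h1 : Tendsto (fun x : ℝ => k * x ^ 2) atTop atTop :=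
    (tendsto_pow_atTop two_ne_zero).const_mul_atTop hk
  exact (Real.tendsto_exp_neg_atTop_nhds_zero.comp h1).congr fun x => by
    simp [Function.comp, neg_mul]

lemma tendsto_sq_mul_exp_neg_mul_sq {k : ℝ} (hk : 0 < k) :
    Tendsto (fun x : ℝ => x ^ 2 * Real.exp (-k * x ^ 2)) atTop (nhds 0) := by
  have h1 : Tendsto (fun x : ℝ => k * x ^ 2) atTop atTop :=
    (tendsto_pow_atTop two_ne_zero).const_mul_atTop hk
  have h2 : Tendsto (fun y : ℝ => y ^ 1 * Real.exp (-y)) atTop (nhds 0) :=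
    Real.tendsto_pow_mul_exp_neg_atTop_nhds_zero 1
  have h3 := (h2.comp h1).const_mul (k⁻¹)
  rw [mul_zero] at h3
  refine h3.congr fun x => ?_
  simp only [Function.comp_def, pow_one, neg_mul]
  field_simp

lemma integrableOn_pow_mul_exp_neg_mul_sq {k : ℝ} (hk : 0 < k) (n : ℕ) :
    IntegrableOn (fun x : ℝ => x ^ n * Real.exp (-k * x ^ 2)) (Ioi 0) := by
  have h := integrableOn_rpow_mul_exp_neg_mul_sq hk (s := (n : ℝ)) (by exact_mod_cast neg_one_lt_zero.trans_le n.cast_nonneg)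
  refine h.congr_fun (fun x hx => by simp only [Real.rpow_natCast]) measurableSet_Ioi

-- derivative of  y ↦ -exp(-k y²)/(2k)
lemma hasDerivAt_aux1 {k : ℝ} (hk : 0 < k) (y : ℝ) :
    HasDerivAt (fun y : ℝ => -Real.exp (-k * y ^ 2) / (2 * k))
      (y * Real.exp (-k * y ^ 2)) y := by
  have h1 : HasDerivAt (fun y : ℝ => -k * y ^ 2) (-k * (2 * y)) y := by
    simpa using ((hasDerivAt_pow 2 y).const_mul (-k))
  have h2 := (h1.exp).neg.div_const (2 * k)
  refine h2.congr_deriv ?_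
  field_simp

lemma integral_Ioi_mul_exp {k : ℝ} (hk : 0 < k) (x : ℝ) :
    ∫ y in Ioi x, y * Real.exp (-k * y ^ 2) = Real.exp (-k * x ^ 2) / (2 * k) := by
  have h := integral_Ioi_of_hasDerivAt_of_tendsto (a := x)
      (f := fun y : ℝ => -Real.exp (-k * y ^ 2) / (2 * k))
      (f' := fun y : ℝ => y * Real.exp (-k * y ^ 2)) (m := 0)
      (by exact (((Real.continuous_exp.comp (by continuity)).neg.div_const _).continuousWithinAt))
      (fun y _ => hasDerivAt_aux1 hk y)
      ((integrable_mul_exp_neg_mul_sq hk).integrableOn)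
      ?_
  · rw [h]; ring
  · have := (tendsto_exp_neg_mul_sq' hk).neg.div_const (2 * k)
    simpa using this

lemma integral_Ioi_zero_mul_exp {k : ℝ} (hk : 0 < k) :
    ∫ y in Ioi (0:ℝ), y * Real.exp (-k * y ^ 2) = 1 / (2 * k) := by
  rw [integral_Ioi_mul_exp hk 0]; simp

-- cube
lemma integral_Ioi_cube_mul_exp {k : ℝ} (hk : 0 < k) :
    ∫ y in Ioi (0:ℝ), y ^ 3 * Real.exp (-k * y ^ 2) = 1 / (2 * k ^ 2) := by
  have hd : ∀ y : ℝ, HasDerivAt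
      (fun y : ℝ => -(y ^ 2 / (2 * k) + 1 / (2 * k ^ 2)) * Real.exp (-k * y ^ 2))
      (y ^ 3 * Real.exp (-k * y ^ 2)) y := by
    intro y
    have h1 : HasDerivAt (fun y : ℝ => -k * y ^ 2) (-k * (2 * y)) y := by
      simpa using ((hasDerivAt_pow 2 y).const_mul (-k))
    have h2 : HasDerivAt (fun y : ℝ => -(y ^ 2 / (2 * k) + 1 / (2 * k ^ 2)))
        (-(2 * y / (2 * k))) y := by
      have := (((hasDerivAt_pow 2 y).div_const (2 * k)).add_const (1 / (2 * k ^ 2))).neg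
      refine this.congr_deriv ?_; ring
    have := h2.mul h1.exp
    refine this.congr_deriv ?_
    field_simp
    ring
  have htend : Tendsto (fun y : ℝ =>
      -(y ^ 2 / (2 * k) + 1 / (2 * k ^ 2)) * Real.exp (-k * y ^ 2)) atTop (nhds 0) := by
    have h1 := (tendsto_sq_mul_exp_neg_mul_sq hk).div_const (2 * k)
    have h2 := (tendsto_exp_neg_mul_sq' hk).div_const (2 * k ^ 2)
    have := (h1.add (by simpa using h2)).neg
    simp only [zero_div, add_zero, neg_zero, zero_add] at this
    refine this.congr fun y => by ring
  have h := integral_Ioi_of_hasDerivAt_of_nonneg (a := 0)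
      (hd 0).continuousAt.continuousWithinAt
      (fun y _ => hd y)
      (fun y hy => mul_nonneg (pow_nonneg (le_of_lt hy) 3) (Real.exp_pos _).le)
      htend
  rw [h]
  norm_num

lemma tendsto_pow_mul_exp_neg_mul_sq'' {k : ℝ} (hk : 0 < k) (n : ℕ) :
    Tendsto (fun x : ℝ => x ^ n * Real.exp (-k * x ^ 2)) atTop (nhds 0) := by
  have h1 : Tendsto (fun x : ℝ => k * x ^ 2) atTop atTop :=
    (tendsto_pow_atTop two_ne_zero).const_mul_atTop hk
  have h2 := ((Real.tendsto_pow_mul_exp_neg_atTop_nhds_zero n).comp h1).const_mul ((k ^ n)⁻¹)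
  rw [mul_zero] at h2
  have h2' : Tendsto (fun x : ℝ => x ^ (2 * n) * Real.exp (-k * x ^ 2)) atTop (nhds 0) := by
    refine h2.congr fun x => ?_
    simp only [Function.comp_def, mul_pow, neg_mul]
    rw [pow_mul]
    field_simp
  refine squeeze_zero' ?_ ?_ h2'
  · filter_upwards [eventually_ge_atTop (0:ℝ)] with x hx
    positivity
  · filter_upwards [eventually_ge_atTop (1:ℝ)] with x hx
    have : x ^ n ≤ x ^ (2 * n) := pow_le_pow_right₀ hx (by omega)
    exact mul_le_mul_of_nonneg_right this (Real.exp_pos _).le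

lemma integral_Ioi_sq_mul_exp {k : ℝ} (hk : 0 < k) :
    ∫ y in Ioi (0:ℝ), y ^ 2 * Real.exp (-k * y ^ 2) = Real.sqrt (π / k) / (4 * k) := by
  have hd : ∀ y : ℝ, HasDerivAt (fun y : ℝ => -(y / (2 * k)) * Real.exp (-k * y ^ 2))
      (y ^ 2 * Real.exp (-k * y ^ 2) - Real.exp (-k * y ^ 2) / (2 * k)) y := by
    intro y
    have h1 : HasDerivAt (fun y : ℝ => -k * y ^ 2) (-k * (2 * y)) y := by
      simpa using ((hasDerivAt_pow 2 y).const_mul (-k))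
    have h2 : HasDerivAt (fun y : ℝ => -(y / (2 * k))) (-(1 / (2 * k))) y := by
      exact ((hasDerivAt_id y).div_const (2 * k)).neg
    have := h2.mul h1.exp
    refine this.congr_deriv ?_
    field_simp
    ring
  have hint2 := integrableOn_pow_mul_exp_neg_mul_sq hk 2
  have hint0 : IntegrableOn (fun y : ℝ => Real.exp (-k * y ^ 2)) (Ioi 0) :=
    (integrable_exp_neg_mul_sq hk).integrableOn
  have h := integral_Ioi_of_hasDerivAt_of_tendsto (a := 0) (m := 0)
      (hd 0).continuousAt.continuousWithinAt
      (fun y _ => hd y)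
      (hint2.sub (hint0.div_const _))
      ?_
  · have h0 : ∫ y in Ioi (0:ℝ), Real.exp (-k * y ^ 2) / (2 * k)
        = Real.sqrt (π / k) / (4 * k) := by
      rw [MeasureTheory.integral_div, integral_gaussian_Ioi]; ring
    have hF0 : (0:ℝ) - -(0 / (2 * k)) * Real.exp (-k * 0 ^ 2) = 0 := by norm_num
    rw [MeasureTheory.integral_sub hint2 (hint0.div_const _), h0, hF0, sub_eq_zero] at h
    exact h
  · have h2 := (tendsto_pow_mul_exp_neg_mul_sq'' hk 1).div_const (2 * k)
    rw [zero_div] at h2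
    have h3 := h2.neg
    rw [neg_zero] at h3
    exact h3.congr fun y => by rw [pow_one]; ring

lemma integral_inv_sq_add {A B : ℝ} (hA : 0 < A) (hB : 0 < B) :
    ∫ u in (0:ℝ)..1, ((B + A * u ^ 2) ^ 2)⁻¹
      = (1 / (2 * B)) * (1 / (A + B) + Real.arctan (Real.sqrt (A / B)) / Real.sqrt (A * B)) := by
  set s := Real.sqrt (A / B) with hs_def
  have hs_pos : 0 < s := Real.sqrt_pos.mpr (div_pos hA hB)
  have hs2 : s ^ 2 = A / B := Real.sq_sqrt (div_pos hA hB).le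
  have hsab : Real.sqrt (A * B) = s * B := by
    have h1 : A * B = (A / B) * B ^ 2 := by field_simp
    rw [h1, Real.sqrt_mul (div_pos hA hB).le, Real.sqrt_sq hB.le, hs_def]
  have hden : ∀ u : ℝ, 0 < B + A * u ^ 2 := fun u => by positivity
  have hd : ∀ u : ℝ, HasDerivAt
      (fun u : ℝ => (1 / (2 * B)) * (u / (B + A * u ^ 2) + Real.arctan (s * u) / Real.sqrt (A * B)))
      (((B + A * u ^ 2) ^ 2)⁻¹) u := by
    intro u
    have hdenu : HasDerivAt (fun u : ℝ => B + A * u ^ 2) (A * (2 * u)) u := by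
      simpa using ((hasDerivAt_pow 2 u).const_mul A).const_add B
    have h1 : HasDerivAt (fun u : ℝ => u / (B + A * u ^ 2))
        ((1 * (B + A * u ^ 2) - u * (A * (2 * u))) / (B + A * u ^ 2) ^ 2) u :=
      (hasDerivAt_id u).div hdenu (hden u).ne'
    have h2 : HasDerivAt (fun u : ℝ => Real.arctan (s * u))
        ((1 / (1 + (s * u) ^ 2)) * s) u := by
      have hin : HasDerivAt (fun u : ℝ => s * u) s u := by
        simpa using (hasDerivAt_id u).const_mul s
      exact (Real.hasDerivAt_arctan (s * u)).comp u hin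
    have := ((h1.add (h2.div_const (Real.sqrt (A * B)))).const_mul (1 / (2 * B)))
    refine this.congr_deriv ?_
    rw [hsab]
    have key2 : 1 + (s * u) ^ 2 = (B + A * u ^ 2) / B := by
      rw [mul_pow, hs2]; field_simp
    rw [key2]
    field_simp
    ring
  have hcont : Continuous fun u : ℝ => ((B + A * u ^ 2) ^ 2)⁻¹ := by
    refine Continuous.inv₀ (by continuity) fun u => by positivity
  have h := intervalIntegral.integral_eq_sub_of_hasDerivAt
      (f := fun u : ℝ => (1 / (2 * B)) * (u / (B + A * u ^ 2) + Real.arctan (s * u) / Real.sqrt (A * B)))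
      (fun u _ => hd u) (hcont.intervalIntegrable 0 1)
  rw [h]
  simp only [mul_one, mul_zero, Real.arctan_zero, zero_div, add_zero, zero_add, one_pow]
  rw [add_comm B A]
  ring

lemma T2_value {A B : ℝ} (hA : 0 < A) (hB : 0 < B) :
    ∫ x in Ioi (0:ℝ),
        (x ^ 2 * Real.exp (-(2 * A)⁻¹ * x ^ 2)) * ∫ t in (0:ℝ)..x, Real.exp (-(2 * B)⁻¹ * t ^ 2)
      = A ^ 2 * B / (A + B) + A * Real.sqrt (A * B) * Real.arctan (Real.sqrt (A / B)) := by
  set α : ℝ := (2 * A)⁻¹ with hα_def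
  set β : ℝ := (2 * B)⁻¹ with hβ_def
  have hα : 0 < α := by positivity
  have hβ : 0 < β := by positivity
  set F : ℝ → ℝ → ℝ := fun x u => x ^ 3 * (Real.exp (-α * x ^ 2) * Real.exp (-β * (x * u) ^ 2))
    with hF_def
  -- step 1: rewrite the integrand using the substitution t = x * u
  have hsub : ∀ x ∈ Ioi (0:ℝ),
      (x ^ 2 * Real.exp (-α * x ^ 2)) * (∫ t in (0:ℝ)..x, Real.exp (-β * t ^ 2))
        = ∫ u in Ioc (0:ℝ) 1, F x u := by
    intro x hx
    have hx0 : (0:ℝ) < x := hx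
    have h1 := intervalIntegral.integral_comp_mul_left (a := (0:ℝ)) (b := 1)
        (fun t => Real.exp (-β * t ^ 2)) (c := x) (ne_of_gt hx0)
    rw [mul_zero, mul_one] at h1
    have h2 : (∫ t in (0:ℝ)..x, Real.exp (-β * t ^ 2))
        = x * ∫ u in (0:ℝ)..1, Real.exp (-β * (x * u) ^ 2) := by
      rw [h1, smul_eq_mul, ← mul_assoc, mul_inv_cancel₀ (ne_of_gt hx0), one_mul]
    rw [h2, intervalIntegral.integral_of_le zero_le_one]
    have h3 : ∫ u in Ioc (0:ℝ) 1, F x u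
        = (x ^ 3 * Real.exp (-α * x ^ 2)) * ∫ u in Ioc (0:ℝ) 1, Real.exp (-β * (x * u) ^ 2) := by
      rw [← MeasureTheory.integral_const_mul (x ^ 3 * Real.exp (-α * x ^ 2))
        (fun u => Real.exp (-β * (x * u) ^ 2))]
      refine setIntegral_congr_fun measurableSet_Ioc fun u _ => ?_
      simp only [hF_def]
      ring
    rw [h3]
    ring
  rw [setIntegral_congr_fun measurableSet_Ioi hsub]
  -- step 2: Fubini swap
  have hcontF : Continuous (Function.uncurry F) := by
    have : Function.uncurry F = fun p : ℝ × ℝ =>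
        p.1 ^ 3 * (Real.exp (-α * p.1 ^ 2) * Real.exp (-β * (p.1 * p.2) ^ 2)) := rfl
    rw [this]
    fun_prop
  have hIntF : Integrable (Function.uncurry F)
      ((volume.restrict (Ioi (0:ℝ))).prod (volume.restrict (Ioc (0:ℝ) 1))) := by
    refine (integrable_prod_iff hcontF.aestronglyMeasurable).mpr ⟨?_, ?_⟩
    · refine ae_of_all _ fun x => ?_
      exact (hcontF.comp (Continuous.prodMk_right x)).integrableOn_Ioc
    · have hmeas : AEStronglyMeasurable
          (fun x => ∫ u in Ioc (0:ℝ) 1, ‖F x u‖)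
          (volume.restrict (Ioi (0:ℝ))) :=
        (hcontF.aestronglyMeasurable.norm.integral_prod_right')
      refine Integrable.mono' (integrableOn_pow_mul_exp_neg_mul_sq hα 3) hmeas ?_
      filter_upwards [ae_restrict_mem measurableSet_Ioi] with x hx
      have hx0 : (0:ℝ) < x := hx
      have hb : ∀ u ∈ Ioc (0:ℝ) 1, ‖‖F x u‖‖ ≤ x ^ 3 * Real.exp (-α * x ^ 2) := by
        intro u _
        rw [norm_norm, hF_def]
        simp only [Real.norm_eq_abs]
        rw [abs_of_nonneg (by positivity)]
        have hle : Real.exp (-β * (x * u) ^ 2) ≤ 1 := by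
          rw [← Real.exp_zero]
          exact Real.exp_le_exp.mpr (by nlinarith [sq_nonneg (x*u)])
        nlinarith [mul_le_mul_of_nonneg_left hle
          (show (0:ℝ) ≤ x ^ 3 * Real.exp (-α * x ^ 2) by positivity)]
      have := norm_setIntegral_le_of_norm_le_const (μ := volume) (s := Ioc (0:ℝ) 1)
          (by simp) (C := x ^ 3 * Real.exp (-α * x ^ 2)) hb
      calc ‖∫ u in Ioc (0:ℝ) 1, ‖F x u‖‖ ≤ x ^ 3 * Real.exp (-α * x ^ 2) * (volume (Ioc (0:ℝ) 1)).toReal := this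
        _ = x ^ 3 * Real.exp (-α * x ^ 2) := by simp
  rw [MeasureTheory.integral_integral_swap hIntF]
  -- step 3: compute the inner integral in x
  have hinner : ∀ u : ℝ, ∫ x in Ioi (0:ℝ), F x u = 2 * A ^ 2 * B ^ 2 * ((B + A * u ^ 2) ^ 2)⁻¹ := by
    intro u
    have hk : 0 < α + β * u ^ 2 := by positivity
    have : ∀ x ∈ Ioi (0:ℝ), F x u = x ^ 3 * Real.exp (-(α + β * u ^ 2) * x ^ 2) := by
      intro x _
      rw [hF_def]
      simp only
      rw [← Real.exp_add]
      congr 1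
      ring
    rw [setIntegral_congr_fun measurableSet_Ioi this, integral_Ioi_cube_mul_exp hk]
    have hABu : α + β * u ^ 2 = (B + A * u ^ 2) / (2 * A * B) := by
      rw [hα_def, hβ_def]
      field_simp
    rw [hABu]
    have h1 : (0:ℝ) < B + A * u ^ 2 := by positivity
    field_simp
  rw [setIntegral_congr_fun measurableSet_Ioc fun u _ => hinner u]
  rw [MeasureTheory.integral_const_mul, ← intervalIntegral.integral_of_le zero_le_one,
    integral_inv_sq_add hA hB]
  have hsq : A ^ 2 * B / Real.sqrt (A * B) = A * Real.sqrt (A * B) := by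
    rw [show A ^ 2 * B = A * (A * B) by ring, mul_div_assoc, Real.div_sqrt]
  have hABpos : (0:ℝ) ≠ A + B := by positivity
  have hsqrtpos : (0:ℝ) < Real.sqrt (A * B) := Real.sqrt_pos.mpr (by positivity)
  have expand : 2 * A ^ 2 * B ^ 2 *
      ((1 / (2 * B)) * (1 / (A + B) + Real.arctan (Real.sqrt (A / B)) / Real.sqrt (A * B)))
      = A ^ 2 * B / (A + B) + A ^ 2 * B / Real.sqrt (A * B) * Real.arctan (Real.sqrt (A / B)) := by
    field_simp
  rw [expand, hsq]

lemma integrable_abs_pow_mul_exp {k : ℝ} (hk : 0 < k) (n : ℕ) :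
    Integrable (fun x : ℝ => |x| ^ n * Real.exp (-k * x ^ 2)) := by
  have hIoi : IntegrableOn (fun x : ℝ => |x| ^ n * Real.exp (-k * x ^ 2)) (Ioi 0) :=
    (integrableOn_pow_mul_exp_neg_mul_sq hk n).congr_fun
      (fun x hx => by rw [abs_of_pos (mem_Ioi.mp hx)]) measurableSet_Ioi
  rw [← integrableOn_univ, ← @Iio_union_Ici _ _ (0 : ℝ), integrableOn_union,
    integrableOn_Ici_iff_integrableOn_Ioi]
  refine ⟨?_, hIoi⟩
  rw [← (Measure.measurePreserving_neg (volume : Measure ℝ)).integrableOn_comp_preimage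
      (Homeomorph.neg ℝ).measurableEmbedding]
  simp only [Function.comp_def, neg_preimage, neg_Iio, neg_zero, abs_neg, neg_sq]
  exact hIoi

-- pdf rewrite
lemma gaussianPDFReal_eq {v : ℝ≥0} (x : ℝ) :
    gaussianPDFReal 0 v x
      = (Real.sqrt (2 * π * v))⁻¹ * Real.exp (-(2 * (v:ℝ))⁻¹ * x ^ 2) := by
  rw [gaussianPDFReal]
  congr 1
  congr 1
  ring

lemma integrable_abs_pow_gaussian (n : ℕ) {v : ℝ≥0} (hv : v ≠ 0) :
    Integrable (fun x => |x| ^ n) (gaussianReal 0 v) := by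
  have hv' : (0:ℝ) < v := by positivity
  rw [gaussianReal_of_var_ne_zero 0 hv,
    integrable_withDensity_iff (measurable_gaussianPDF 0 v)
      (ae_of_all _ fun x => ENNReal.ofReal_lt_top)]
  have hk : (0:ℝ) < (2 * (v:ℝ))⁻¹ := by positivity
  have := (integrable_abs_pow_mul_exp hk n).mul_const ((Real.sqrt (2 * π * v))⁻¹)
  refine this.congr (ae_of_all _ fun x => ?_)
  have hpd : ((gaussianPDF 0 v x).toReal : ℝ) = gaussianPDFReal 0 v x := by
    rw [gaussianPDF_def]
    exact ENNReal.toReal_ofReal (gaussianPDFReal_nonneg 0 v x)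
  simp only [hpd, gaussianPDFReal_eq]
  ring

-- inner integral computation
lemma inner_value {B : ℝ≥0} (hB : 0 < (B:ℝ)) {x : ℝ} (hx : 0 ≤ x) :
    ∫ y in Ioi (-x), (x + y) * Real.exp (-(2 * (B:ℝ))⁻¹ * y ^ 2)
      = x * (Real.sqrt (2 * π * B) / 2 + ∫ t in (0:ℝ)..x, Real.exp (-(2 * (B:ℝ))⁻¹ * t ^ 2))
        + B * Real.exp (-(2 * (B:ℝ))⁻¹ * x ^ 2) := by
  set β : ℝ := (2 * (B:ℝ))⁻¹ with hβ_def
  have hβ : 0 < β := by positivity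
  have hint0 : IntegrableOn (fun y : ℝ => Real.exp (-β * y ^ 2)) (Ioi (-x)) :=
    (integrable_exp_neg_mul_sq hβ).integrableOn
  have hint1 : IntegrableOn (fun y : ℝ => y * Real.exp (-β * y ^ 2)) (Ioi (-x)) :=
    (integrable_mul_exp_neg_mul_sq hβ).integrableOn
  have hsplit : ∫ y in Ioi (-x), (x + y) * Real.exp (-β * y ^ 2)
      = (∫ y in Ioi (-x), x * Real.exp (-β * y ^ 2))
        + ∫ y in Ioi (-x), y * Real.exp (-β * y ^ 2) := by
    rw [← MeasureTheory.integral_add (hint0.const_mul x) hint1]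
    refine setIntegral_congr_fun measurableSet_Ioi fun y _ => by ring
  rw [hsplit]
  have h1 : ∫ y in Ioi (-x), y * Real.exp (-β * y ^ 2) = B * Real.exp (-β * x ^ 2) := by
    rw [integral_Ioi_mul_exp hβ (-x), neg_sq]
    rw [hβ_def]
    field_simp
  have h2 : ∫ y in Ioi (-x), Real.exp (-β * y ^ 2)
      = Real.sqrt (2 * π * B) / 2 + ∫ t in (0:ℝ)..x, Real.exp (-β * t ^ 2) := by
    have hunion : Ioc (-x) 0 ∪ Ioi (0:ℝ) = Ioi (-x) := Ioc_union_Ioi_eq_Ioi (by linarith)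
    rw [← hunion, setIntegral_union Ioc_disjoint_Ioi_same measurableSet_Ioi
      ((integrable_exp_neg_mul_sq hβ).integrableOn) ((integrable_exp_neg_mul_sq hβ).integrableOn)]
    have ha : ∫ y in Ioc (-x) 0, Real.exp (-β * y ^ 2)
        = ∫ t in (0:ℝ)..x, Real.exp (-β * t ^ 2) := by
      rw [← intervalIntegral.integral_of_le (by linarith : -x ≤ 0)]
      have hcn := intervalIntegral.integral_comp_neg (a := (0:ℝ)) (b := x)
        (fun t => Real.exp (-β * t ^ 2))
      simp only [neg_sq, neg_zero] at hcn
      rw [← hcn]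
    have hb2 : ∫ y in Ioi (0:ℝ), Real.exp (-β * y ^ 2) = Real.sqrt (2 * π * B) / 2 := by
      rw [integral_gaussian_Ioi]
      congr 2
      rw [hβ_def]
      field_simp
    rw [ha, hb2]
    ring
  rw [MeasureTheory.integral_const_mul, h1, h2]

lemma outer_value {A B : ℝ} (hA : 0 < A) (hB : 0 < B) :
    ∫ x in Ioi (0:ℝ), Real.exp (-(2 * A)⁻¹ * x ^ 2) *
        (x * (x * (Real.sqrt (2 * π * B) / 2 + ∫ t in (0:ℝ)..x, Real.exp (-(2 * B)⁻¹ * t ^ 2))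
          + B * Real.exp (-(2 * B)⁻¹ * x ^ 2)))
      = Real.sqrt (2 * π * B) / 2 * (Real.sqrt (2 * π * A) * A / 2)
        + (A ^ 2 * B / (A + B) + A * Real.sqrt (A * B) * Real.arctan (Real.sqrt (A / B)))
        + A * B ^ 2 / (A + B) := by
  set α : ℝ := (2 * A)⁻¹ with hα_def
  set β : ℝ := (2 * B)⁻¹ with hβ_def
  have hα : 0 < α := by positivity
  have hβ : 0 < β := by positivity
  set G : ℝ → ℝ := fun x => ∫ t in (0:ℝ)..x, Real.exp (-β * t ^ 2) with hG_def
  have hGcont : Continuous G :=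
    (integrable_exp_neg_mul_sq hβ).continuous_primitive 0
  have hGbound : ∀ x : ℝ, 0 < x → |G x| ≤ x := by
    intro x hx
    have h := intervalIntegral.norm_integral_le_of_norm_le_const (C := 1)
      (f := fun t => Real.exp (-β * t ^ 2)) (a := 0) (b := x) ?_
    · refine le_trans (le_of_eq (Real.norm_eq_abs _).symm) (le_trans h ?_)
      rw [sub_zero, abs_of_pos hx, one_mul]
    · intro t _
      rw [Real.norm_eq_abs, abs_of_pos (Real.exp_pos _)]
      rw [← Real.exp_zero]
      exact Real.exp_le_exp.mpr (by nlinarith [sq_nonneg t])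
  -- the three pieces
  set f1 : ℝ → ℝ := fun x => Real.sqrt (2 * π * B) / 2 * (x ^ 2 * Real.exp (-α * x ^ 2))
  set f2 : ℝ → ℝ := fun x => (x ^ 2 * Real.exp (-α * x ^ 2)) * G x
  set f3 : ℝ → ℝ := fun x => B * (x * Real.exp (-(α + β) * x ^ 2))
  have hi1 : IntegrableOn f1 (Ioi 0) :=
    (integrableOn_pow_mul_exp_neg_mul_sq hα 2).const_mul _
  have hi2 : IntegrableOn f2 (Ioi 0) := by
    refine Integrable.mono' (integrableOn_pow_mul_exp_neg_mul_sq hα 3)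
      (((continuous_pow 2).mul (Real.continuous_exp.comp (by fun_prop))).mul
        hGcont).aestronglyMeasurable.restrict ?_
    filter_upwards [ae_restrict_mem measurableSet_Ioi] with x hx
    have hx0 : (0:ℝ) < x := hx
    rw [Real.norm_eq_abs, abs_mul, abs_of_nonneg (by positivity : (0:ℝ) ≤ x ^ 2 * Real.exp (-α * x ^ 2))]
    calc x ^ 2 * Real.exp (-α * x ^ 2) * |G x| ≤ x ^ 2 * Real.exp (-α * x ^ 2) * x := by
          exact mul_le_mul_of_nonneg_left (hGbound x hx0) (by positivity)
      _ = x ^ 3 * Real.exp (-α * x ^ 2) := by ring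
  have hi3 : IntegrableOn f3 (Ioi 0) := by
    have h := (integrableOn_pow_mul_exp_neg_mul_sq (by positivity : (0:ℝ) < α + β) 1).const_mul B
    exact IntegrableOn.congr_fun h (fun x _ => by simp only [f3, pow_one]) measurableSet_Ioi
  have hsplit : ∀ x ∈ Ioi (0:ℝ),
      Real.exp (-α * x ^ 2) * (x * (x * (Real.sqrt (2 * π * B) / 2 + G x)
        + B * Real.exp (-β * x ^ 2)))
      = f1 x + f2 x + f3 x := by
    intro x _
    simp only [f1, f2, f3]
    rw [show Real.exp (-(α + β) * x ^ 2) = Real.exp (-α * x ^ 2) * Real.exp (-β * x ^ 2) from by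
      rw [← Real.exp_add]; congr 1; ring]
    ring
  rw [setIntegral_congr_fun measurableSet_Ioi hsplit,
    MeasureTheory.integral_add (f := fun x => f1 x + f2 x) (g := f3) (hi1.add hi2) hi3,
    MeasureTheory.integral_add hi1 hi2]
  have v1 : ∫ x in Ioi (0:ℝ), f1 x = Real.sqrt (2 * π * B) / 2 * (Real.sqrt (2 * π * A) * A / 2) := by
    rw [MeasureTheory.integral_const_mul, integral_Ioi_sq_mul_exp hα]
    have h1 : π / α = 2 * π * A := by rw [hα_def]; field_simp
    have h2 : (4 : ℝ) * α = 2 / A := by rw [hα_def]; field_simp; ring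
    rw [h1, h2]
    field_simp
  have v2 : ∫ x in Ioi (0:ℝ), f2 x
      = A ^ 2 * B / (A + B) + A * Real.sqrt (A * B) * Real.arctan (Real.sqrt (A / B)) :=
    T2_value hA hB
  have v3 : ∫ x in Ioi (0:ℝ), f3 x = A * B ^ 2 / (A + B) := by
    rw [MeasureTheory.integral_const_mul]
    have hk : 0 < α + β := by positivity
    have : ∫ x in Ioi (0:ℝ), x * Real.exp (-(α + β) * x ^ 2) = 1 / (2 * (α + β)) :=
      integral_Ioi_zero_mul_exp hk
    rw [this, hα_def, hβ_def]
    have hAB : A + B ≠ 0 := by positivity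
    field_simp
    ring
  rw [v1, v2, v3]

lemma integral_gaussian_eq {v : ℝ≥0} (hv : v ≠ 0) (g : ℝ → ℝ) :
    ∫ y, g y ∂(gaussianReal 0 v) = ∫ y, gaussianPDFReal 0 v y * g y := by
  rw [gaussianReal_of_var_ne_zero 0 hv]
  have hd : gaussianPDF 0 v = fun x => (((gaussianPDFReal 0 v x).toNNReal : ℝ≥0) : ENNReal) :=
    rfl
  rw [hd, integral_withDensity_eq_integral_smul
    ((measurable_gaussianPDFReal 0 v).real_toNNReal) g]
  refine integral_congr_ae (ae_of_all _ fun y => ?_)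
  show (gaussianPDFReal 0 v y).toNNReal • g y = gaussianPDFReal 0 v y * g y
  rw [NNReal.smul_def, Real.coe_toNNReal _ (gaussianPDFReal_nonneg 0 v y), smul_eq_mul]

theorem gaussian_F3_moment (a b : ℝ≥0) (ha : 0 < a) (hb : 0 < b) :
    ∫ p : ℝ × ℝ,
        (p.1 + p.2) * max p.1 0 * (if 0 ≤ p.1 + p.2 then (1:ℝ) else 0)
        ∂((gaussianReal 0 a).prod (gaussianReal 0 b))
      = (a : ℝ) / 4 +
          ((a : ℝ) / (2 * Real.pi)) * Real.arctan (Real.sqrt ((a : ℝ) / (b : ℝ))) +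
          Real.sqrt ((a : ℝ) * (b : ℝ)) / (2 * Real.pi) := by
  have hA : (0:ℝ) < a := ha
  have hB : (0:ℝ) < b := hb
  set f : ℝ × ℝ → ℝ :=
    fun p => (p.1 + p.2) * max p.1 0 * (if 0 ≤ p.1 + p.2 then (1:ℝ) else 0) with hf_def
  have hfm : Measurable f := by
    refine (((measurable_fst.add measurable_snd).mul
      (measurable_fst.max measurable_const)).mul (Measurable.ite ?_ measurable_const
        measurable_const))
    exact measurableSet_le measurable_const (measurable_fst.add measurable_snd)
  have hInt : Integrable f ((gaussianReal 0 a).prod (gaussianReal 0 b)) := by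
    have hg : Integrable (fun p : ℝ × ℝ => |p.1| ^ 2 * 1 + |p.1| ^ 1 * |p.2| ^ 1)
        ((gaussianReal 0 a).prod (gaussianReal 0 b)) := by
      exact ((integrable_abs_pow_gaussian 2 ha.ne').mul_prod (integrable_const 1)).add
        ((integrable_abs_pow_gaussian 1 ha.ne').mul_prod (integrable_abs_pow_gaussian 1 hb.ne'))
    refine hg.mono' hfm.aestronglyMeasurable (ae_of_all _ fun p => ?_)
    obtain ⟨x, y⟩ := p
    have h1 : |x + y| ≤ |x| + |y| := abs_add_le x y
    have h2 : |max x 0| ≤ |x| := by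
      rw [abs_of_nonneg (le_max_right x 0)]
      exact max_le (le_abs_self x) (abs_nonneg x)
    have h3 : |if 0 ≤ x + y then (1:ℝ) else 0| ≤ 1 := by split_ifs <;> norm_num
    have : ‖f (x, y)‖ ≤ (|x| + |y|) * |x| * 1 := by
      rw [hf_def, Real.norm_eq_abs]
      simp only
      rw [abs_mul, abs_mul]
      exact mul_le_mul (mul_le_mul h1 h2 (abs_nonneg _) (by positivity)) h3
        (abs_nonneg _) (by positivity)
    refine this.trans (le_of_eq ?_)
    simp only
    ring
  rw [MeasureTheory.integral_prod _ hInt]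
  -- outer integral as density integral
  rw [integral_gaussian_eq ha.ne']
  have hzero : ∀ x : ℝ, x ∉ Ioi (0:ℝ) →
      gaussianPDFReal 0 a x * (∫ y, f (x, y) ∂(gaussianReal 0 b)) = 0 := by
    intro x hx
    have hx0 : x ≤ 0 := not_lt.mp hx
    have : ∀ y : ℝ, f (x, y) = 0 := by
      intro y
      rw [hf_def]
      simp only [max_eq_right hx0, mul_zero, zero_mul]
    rw [funext this]
    simp
  rw [← setIntegral_eq_integral_of_forall_compl_eq_zero hzero]
  have hstep : ∀ x ∈ Ioi (0:ℝ),
      gaussianPDFReal 0 a x * (∫ y, f (x, y) ∂(gaussianReal 0 b))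
        = ((Real.sqrt (2 * π * a))⁻¹ * (Real.sqrt (2 * π * b))⁻¹) *
            (Real.exp (-(2 * (a:ℝ))⁻¹ * x ^ 2) *
              (x * (x * (Real.sqrt (2 * π * b) / 2
                  + ∫ t in (0:ℝ)..x, Real.exp (-(2 * (b:ℝ))⁻¹ * t ^ 2))
                + b * Real.exp (-(2 * (b:ℝ))⁻¹ * x ^ 2)))) := by
    intro x hx
    have hx0 : (0:ℝ) < x := hx
    have hin : ∫ y, f (x, y) ∂(gaussianReal 0 b)
        = x * ((Real.sqrt (2 * π * b))⁻¹ *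
            ∫ y in Ioi (-x), (x + y) * Real.exp (-(2 * (b:ℝ))⁻¹ * y ^ 2)) := by
      rw [integral_gaussian_eq hb.ne']
      have hind : (fun y => gaussianPDFReal 0 b y * f (x, y))
          = Set.indicator (Ici (-x))
              (fun y => (x * (Real.sqrt (2 * π * b))⁻¹) *
                ((x + y) * Real.exp (-(2 * (b:ℝ))⁻¹ * y ^ 2))) := by
        funext y
        rw [hf_def]
        simp only
        by_cases h : -x ≤ y
        · rw [Set.indicator_of_mem (mem_Ici.mpr h), if_pos (by linarith),
            max_eq_left hx0.le, gaussianPDFReal_eq]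
          ring
        · rw [Set.indicator_of_notMem (by simpa using h), if_neg (by
            intro hc
            exact h (by linarith)), mul_zero, mul_zero]
      rw [hind, MeasureTheory.integral_indicator measurableSet_Ici,
        MeasureTheory.integral_Ici_eq_integral_Ioi, MeasureTheory.integral_const_mul, mul_assoc]
    rw [hin, inner_value hB hx0.le, gaussianPDFReal_eq]
    ring
  rw [setIntegral_congr_fun measurableSet_Ioi hstep, MeasureTheory.integral_const_mul,
    outer_value hA hB]
  -- final algebra
  set S : ℝ := Real.sqrt ((a:ℝ) * b) with hS_def
  have hS0 : 0 < S := Real.sqrt_pos.mpr (by positivity)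
  have hS2 : S ^ 2 = (a:ℝ) * b := Real.sq_sqrt (by positivity)
  have hprod : Real.sqrt (2 * π * a) * Real.sqrt (2 * π * b) = 2 * π * S := by
    rw [← Real.sqrt_mul (by positivity), hS_def,
      show (2 * π * a) * (2 * π * b) = (2 * π) ^ 2 * ((a:ℝ) * b) by ring,
      Real.sqrt_mul (by positivity), Real.sqrt_sq (by positivity)]
  have hsa : Real.sqrt (2 * π * a) ≠ 0 := by positivity
  have hsb : Real.sqrt (2 * π * b) ≠ 0 := by positivity
  have hiprod : (Real.sqrt (2 * π * a))⁻¹ * (Real.sqrt (2 * π * b))⁻¹ = (2 * π * S)⁻¹ := by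
    rw [← mul_inv, hprod]
  rw [hiprod]
  have hT : Real.sqrt (2 * π * b) / 2 * (Real.sqrt (2 * π * a) * (a:ℝ) / 2)
      = 2 * π * S * (a/4) := by
    rw [show Real.sqrt (2 * π * (b:ℝ)) / 2 * (Real.sqrt (2 * π * a) * (a:ℝ) / 2)
      = Real.sqrt (2 * π * (a:ℝ)) * Real.sqrt (2 * π * b) * ((a:ℝ)/4) by ring, hprod]
  rw [hT]
  have hrest : (a:ℝ) ^ 2 * b / (a + b) + (a:ℝ) * b ^ 2 / (a + b) = S ^ 2 := by
    rw [hS2]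
    field_simp
  have hπ : (0:ℝ) < π := Real.pi_pos
  have hsum : 2 * π * S * ((a:ℝ)/4) + ((a:ℝ) ^ 2 * b / (a + b)
        + (a:ℝ) * S * Real.arctan (Real.sqrt ((a:ℝ)/b))) + (a:ℝ) * b ^ 2 / (a + b)
      = 2 * π * S * ((a:ℝ)/4) + (a:ℝ) * S * Real.arctan (Real.sqrt ((a:ℝ)/b)) + S ^ 2 := by
    linear_combination hrest
  rw [hsum]
  field_simp
end

section
/- Let x₁ ~ N(0,a) and x₂ ~ N(0,b) be independent centered Gaussians, and σ the ReLU function. Then E[σ(x₁)·σ(x₁+x₂)] = a/4 + (a/(2π))·arctan(√(a/b)) + √(ab)/(2π). -/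
open MeasureTheory ProbabilityTheory
open MeasureTheory ProbabilityTheory Real Set Filter intervalIntegral
open scoped NNReal ENNReal Topology

set_option maxHeartbeats 1000000

lemma gaussian_prod_eq_withDensity (a b : ℝ≥0) (ha : a ≠ 0) (hb : b ≠ 0) :
    (gaussianReal 0 a).prod (gaussianReal 0 b)
      = (volume.prod volume).withDensity
          (fun p => ENNReal.ofReal (gaussianPDFReal 0 a p.1 * gaussianPDFReal 0 b p.2)) := by
  refine Measure.prod_eq fun s t hs ht => ?_
  rw [withDensity_apply _ (hs.prod ht), ← Measure.prod_restrict]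
  have h : ∀ p : ℝ × ℝ, ENNReal.ofReal (gaussianPDFReal 0 a p.1 * gaussianPDFReal 0 b p.2)
      = ENNReal.ofReal (gaussianPDFReal 0 a p.1) * ENNReal.ofReal (gaussianPDFReal 0 b p.2) :=
    fun p => ENNReal.ofReal_mul (gaussianPDFReal_nonneg _ _ _)
  simp_rw [h]
  rw [lintegral_prod_mul
      (((measurable_gaussianPDFReal 0 a).ennreal_ofReal).aemeasurable)
      (((measurable_gaussianPDFReal 0 b).ennreal_ofReal).aemeasurable),
    gaussianReal_apply _ ha s, gaussianReal_apply _ hb t]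
  rfl

lemma integral_gaussian_prod (a b : ℝ≥0) (ha : a ≠ 0) (hb : b ≠ 0) (F : ℝ × ℝ → ℝ) :
    ∫ p, F p ∂((gaussianReal 0 a).prod (gaussianReal 0 b))
      = ∫ p : ℝ × ℝ, (gaussianPDFReal 0 a p.1 * gaussianPDFReal 0 b p.2) * F p := by
  rw [gaussian_prod_eq_withDensity a b ha hb, ← Measure.volume_eq_prod]
  have hmeas : Measurable fun p : ℝ × ℝ =>
      ((gaussianPDFReal 0 a p.1 * gaussianPDFReal 0 b p.2).toNNReal) :=
    (((measurable_gaussianPDFReal 0 a).comp measurable_fst).mul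
      ((measurable_gaussianPDFReal 0 b).comp measurable_snd)).real_toNNReal
  rw [show (fun p : ℝ × ℝ => ENNReal.ofReal (gaussianPDFReal 0 a p.1 * gaussianPDFReal 0 b p.2))
      = (fun p : ℝ × ℝ =>
        ((gaussianPDFReal 0 a p.1 * gaussianPDFReal 0 b p.2).toNNReal : ℝ≥0∞)) from rfl,
    integral_withDensity_eq_integral_smul hmeas]
  congr 1
  ext p
  rw [NNReal.smul_def, Real.coe_toNNReal _
    (mul_nonneg (gaussianPDFReal_nonneg _ _ _) (gaussianPDFReal_nonneg _ _ _)), smul_eq_mul]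

lemma nnreal_smul_prod (c d : ℝ≥0) :
    ((c : ℝ≥0) • (volume : Measure ℝ)).prod ((d : ℝ≥0) • (volume : Measure ℝ))
      = ((c * d : ℝ≥0)) • ((volume : Measure ℝ).prod volume) := by
  refine Measure.prod_eq fun s t hs ht => ?_
  simp only [Measure.smul_apply, Measure.prod_prod, ENNReal.smul_def, smul_eq_mul,
    ENNReal.coe_mul]
  ring

lemma integral_scaling {α β : ℝ} (hα : 0 < α) (hβ : 0 < β) (G : ℝ × ℝ → ℝ) (hG : Continuous G) :
    (∫ p : ℝ × ℝ, G (α * p.1, β * p.2)) = (α⁻¹ * β⁻¹) * ∫ p : ℝ × ℝ, G p := by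
  have h1 : Measurable fun x : ℝ => α * x := measurable_const_mul α
  have h2 : Measurable fun x : ℝ => β * x := measurable_const_mul β
  have hφ : Measurable (Prod.map (fun x : ℝ => α * x) (fun x : ℝ => β * x)) := h1.prodMap h2
  rw [Measure.volume_eq_prod]
  have key : (∫ p : ℝ × ℝ, G (α * p.1, β * p.2) ∂(volume.prod volume))
      = ∫ p, G p ∂((volume.prod volume).map
          (Prod.map (fun x : ℝ => α * x) (fun x : ℝ => β * x))) :=
    (integral_map hφ.aemeasurable hG.aestronglyMeasurable).symm
  rw [key, ← Measure.map_prod_map _ _ h1 h2,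
    Real.map_volume_mul_left hα.ne', Real.map_volume_mul_left hβ.ne']
  have hc : ∀ r : ℝ, ENNReal.ofReal r • (volume : Measure ℝ) = r.toNNReal • volume := by
    intro r
    rw [ENNReal.smul_def]
    rfl
  rw [hc, hc, nnreal_smul_prod, ENNReal.smul_def, MeasureTheory.integral_smul_measure]
  simp only [ENNReal.coe_mul, ENNReal.toReal_mul, ENNReal.coe_toReal, smul_eq_mul]
  rw [Real.coe_toNNReal _ (abs_nonneg _), Real.coe_toNNReal _ (abs_nonneg _),
    abs_of_pos (inv_pos.2 hα), abs_of_pos (inv_pos.2 hβ)]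

lemma radial_integral : ∫ r in Ioi (0:ℝ), r ^ 3 * Real.exp (-r ^ 2 / 2) = 2 := by
  have hd : ∀ r ∈ Ioi (0:ℝ), HasDerivAt (fun r : ℝ => -(r ^ 2 + 2) * Real.exp (-r ^ 2 / 2))
      (r ^ 3 * Real.exp (-r ^ 2 / 2)) r := by
    intro r _
    have h1 : HasDerivAt (fun r : ℝ => -r ^ 2 / 2) (-r) r := by
      have := ((hasDerivAt_pow 2 r).neg).div_const 2
      simpa using this.congr_deriv (by push_cast; ring)
    have h2 : HasDerivAt (fun r : ℝ => Real.exp (-r ^ 2 / 2)) (Real.exp (-r ^ 2 / 2) * (-r)) r :=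
      (Real.hasDerivAt_exp _).comp r h1
    have h3 : HasDerivAt (fun r : ℝ => -(r ^ 2 + 2)) (-(2 * r)) r := by
      exact (((hasDerivAt_pow 2 r).add_const 2).neg).congr_deriv (by norm_num)
    have := h3.mul h2
    refine this.congr_deriv ?_
    push_cast
    ring
  have hint : IntegrableOn (fun r : ℝ => r ^ 3 * Real.exp (-r ^ 2 / 2)) (Ioi 0) := by
    have := (integrable_rpow_mul_exp_neg_mul_sq (by norm_num : (0:ℝ) < 1/2)
      (by norm_num : (-1:ℝ) < 3)).integrableOn (s := Ioi (0:ℝ))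
    refine this.congr_fun (fun x hx => ?_) measurableSet_Ioi
    beta_reduce
    rw [show (3:ℝ) = ((3:ℕ):ℝ) by norm_num, Real.rpow_natCast]
    ring_nf
  have hlim : Tendsto (fun r : ℝ => -(r ^ 2 + 2) * Real.exp (-r ^ 2 / 2)) atTop (𝓝 0) := by
    have h1 : Tendsto (fun u : ℝ => (-2) * (u * Real.exp (-u) + Real.exp (-u))) atTop (𝓝 0) := by
      have := (tendsto_pow_mul_exp_neg_atTop_nhds_zero 1).add
        (Real.tendsto_exp_neg_atTop_nhds_zero)
      simpa using this.const_mul (-2)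
    have h2 : Tendsto (fun r : ℝ => r ^ 2 / 2) atTop atTop :=
      (tendsto_pow_atTop (by norm_num)).atTop_div_const (by norm_num)
    have := h1.comp h2
    refine this.congr fun r => ?_
    simp only [Function.comp]
    rw [show -r ^ 2 / 2 = -(r ^ 2 / 2) by ring]
    ring
  have hcont : ContinuousWithinAt (fun r : ℝ => -(r ^ 2 + 2) * Real.exp (-r ^ 2 / 2)) (Ici 0) 0 :=
    (Continuous.mul (by continuity) (by continuity)).continuousWithinAt
  rw [integral_Ioi_of_hasDerivAt_of_tendsto hcont hd hint hlim]
  norm_num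

lemma angular_integral {α β : ℝ} (hα : 0 < α) (hβ : 0 < β) :
    ∫ θ in Ioo (-π) π, max (Real.cos θ) 0 * max (α * Real.cos θ + β * Real.sin θ) 0
      = α * π / 4 + α * Real.arctan (α / β) / 2 + β / 2 := by
  set h : ℝ → ℝ := fun θ => max (Real.cos θ) 0 * max (α * Real.cos θ + β * Real.sin θ) 0 with hh
  set θ₁ := Real.arctan (α / β) with hθ₁
  have hθ₁pos : 0 < θ₁ := by
    rw [hθ₁, show (0:ℝ) = Real.arctan 0 by simp]
    exact Real.arctan_strictMono (div_pos hα hβ)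
  have hθ₁lt : θ₁ < π / 2 := Real.arctan_lt_pi_div_two _
  have hπ : 0 < π := Real.pi_pos
  -- values of sin θ₁, cos θ₁
  have hr : Real.sqrt (1 + (α / β) ^ 2) = Real.sqrt (α ^ 2 + β ^ 2) / β := by
    rw [show 1 + (α / β) ^ 2 = (α ^ 2 + β ^ 2) / β ^ 2 by field_simp; ring,
      Real.sqrt_div (by positivity), Real.sqrt_sq hβ.le]
  have hsq : (0:ℝ) < Real.sqrt (α ^ 2 + β ^ 2) := Real.sqrt_pos.2 (by positivity)
  have hs : Real.sin θ₁ = α / Real.sqrt (α ^ 2 + β ^ 2) := by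
    rw [hθ₁, Real.sin_arctan, hr]
    field_simp
  have hc : Real.cos θ₁ = β / Real.sqrt (α ^ 2 + β ^ 2) := by
    rw [hθ₁, Real.cos_arctan, hr]
    field_simp
  have key : ∀ θ : ℝ, α * Real.cos θ + β * Real.sin θ
      = Real.sqrt (α ^ 2 + β ^ 2) * Real.sin (θ + θ₁) := by
    intro θ
    rw [Real.sin_add, hs, hc]
    field_simp
    ring
  -- convert to interval integral
  have hconv : ∫ θ in Ioo (-π) π, h θ = ∫ θ in (-π)..π, h θ := by
    rw [intervalIntegral.integral_of_le (by linarith), integral_Ioc_eq_integral_Ioo]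
  have hcont : Continuous h := by
    apply Continuous.mul
    · exact continuous_cos.max continuous_const
    · exact ((continuous_const.mul continuous_cos).add
        (continuous_const.mul continuous_sin)).max continuous_const
  have hint : ∀ u v : ℝ, IntervalIntegrable h volume u v := fun u v =>
    hcont.intervalIntegrable u v
  -- split
  have hsplit : ∫ θ in (-π)..π, h θ
      = (∫ θ in (-π)..(-θ₁), h θ) + (∫ θ in (-θ₁)..(π/2), h θ) + ∫ θ in (π/2)..π, h θ := by
    rw [integral_add_adjacent_intervals (hint _ _) (hint _ _),
      integral_add_adjacent_intervals (hint _ _) (hint _ _)]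
  -- first piece is zero
  have h1 : (∫ θ in (-π)..(-θ₁), h θ) = 0 := by
    rw [show (0:ℝ) = ∫ θ in (-π)..(-θ₁), (0:ℝ) by simp]
    apply intervalIntegral.integral_congr
    intro θ hθ
    rw [uIcc_of_le (by linarith)] at hθ
    obtain ⟨hθl, hθr⟩ := hθ
    rcases le_or_gt (Real.cos θ) 0 with hcos | hcos
    · simp [hh, max_eq_right hcos]
    · have hθgt : -(π/2) < θ := by
        by_contra hcon
        push_neg at hcon
        have : Real.cos θ ≤ 0 := by
          rw [← Real.cos_neg]
          apply Real.cos_nonpos_of_pi_div_two_le_of_le (by linarith) (by linarith)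
        linarith
      have hsin : Real.sin (θ + θ₁) ≤ 0 := by
        rw [← neg_nonneg, ← Real.sin_neg]
        apply Real.sin_nonneg_of_nonneg_of_le_pi (by linarith) (by linarith)
      have : α * Real.cos θ + β * Real.sin θ ≤ 0 := by
        rw [key θ]
        exact mul_nonpos_of_nonneg_of_nonpos hsq.le hsin
      simp [hh, max_eq_right this]
  -- third piece is zero
  have h3 : (∫ θ in (π/2)..π, h θ) = 0 := by
    rw [show (0:ℝ) = ∫ θ in (π/2)..π, (0:ℝ) by simp]
    apply intervalIntegral.integral_congr
    intro θ hθ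
    rw [uIcc_of_le (by linarith)] at hθ
    have hcos : Real.cos θ ≤ 0 :=
      Real.cos_nonpos_of_pi_div_two_le_of_le hθ.1 (by linarith [hθ.2])
    simp [hh, max_eq_right hcos]
  -- middle piece
  have h2 : (∫ θ in (-θ₁)..(π/2), h θ)
      = ∫ θ in (-θ₁)..(π/2), Real.cos θ * (α * Real.cos θ + β * Real.sin θ) := by
    apply intervalIntegral.integral_congr
    intro θ hθ
    rw [uIcc_of_le (by linarith)] at hθ
    obtain ⟨hθl, hθr⟩ := hθ
    have hcos : 0 ≤ Real.cos θ := Real.cos_nonneg_of_mem_Icc ⟨by linarith, hθr⟩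
    have hsin : 0 ≤ Real.sin (θ + θ₁) :=
      Real.sin_nonneg_of_nonneg_of_le_pi (by linarith) (by linarith)
    have hpos : 0 ≤ α * Real.cos θ + β * Real.sin θ := by
      rw [key θ]; positivity
    simp [hh, max_eq_left hcos, max_eq_left hpos]
  have h2val : (∫ θ in (-θ₁)..(π/2), Real.cos θ * (α * Real.cos θ + β * Real.sin θ))
      = α * π / 4 + β / 2 + α * θ₁ / 2 := by
    have hderiv : ∀ θ ∈ uIcc (-θ₁) (π/2),
        HasDerivAt (fun θ : ℝ => α * (θ + Real.sin θ * Real.cos θ) / 2 + β * Real.sin θ ^ 2 / 2)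
          (Real.cos θ * (α * Real.cos θ + β * Real.sin θ)) θ := by
      intro θ _
      have hd1 : HasDerivAt (fun θ : ℝ => θ + Real.sin θ * Real.cos θ)
          (1 + (Real.cos θ * Real.cos θ + Real.sin θ * (-Real.sin θ))) θ :=
        (hasDerivAt_id θ).add ((Real.hasDerivAt_sin θ).mul (Real.hasDerivAt_cos θ))
      have hd2 : HasDerivAt (fun θ : ℝ => Real.sin θ ^ 2)
          (2 * Real.sin θ * Real.cos θ) θ := by
        have := (Real.hasDerivAt_sin θ).pow 2
        exact this.congr_deriv (by push_cast; ring)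
      have := ((hd1.const_mul α).div_const 2).add ((hd2.const_mul β).div_const 2)
      refine this.congr_deriv ?_
      have hpy : Real.cos θ * Real.cos θ = 1 - Real.sin θ * Real.sin θ := by
        have := Real.sin_sq_add_cos_sq θ
        nlinarith
      ring_nf
      nlinarith [Real.sin_sq_add_cos_sq θ]
    rw [intervalIntegral.integral_eq_sub_of_hasDerivAt hderiv
      ((Continuous.mul continuous_cos ((continuous_const.mul continuous_cos).add
        (continuous_const.mul continuous_sin))).intervalIntegrable _ _)]
    have hq : Real.sqrt (α ^ 2 + β ^ 2) * Real.sqrt (α ^ 2 + β ^ 2) = α ^ 2 + β ^ 2 :=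
      Real.mul_self_sqrt (by positivity)
    have hq0 : (0:ℝ) < α ^ 2 + β ^ 2 := by positivity
    have hsc : Real.sin θ₁ * Real.cos θ₁ = α * β / (α ^ 2 + β ^ 2) := by
      rw [hs, hc, div_mul_div_comm, hq]
    have hs2 : Real.sin θ₁ ^ 2 = α ^ 2 / (α ^ 2 + β ^ 2) := by
      rw [hs, div_pow, Real.sq_sqrt (by positivity : (0:ℝ) ≤ α ^ 2 + β ^ 2)]
    rw [Real.sin_pi_div_two, Real.cos_pi_div_two, Real.sin_neg, Real.cos_neg]
    rw [show -Real.sin θ₁ * Real.cos θ₁ = -(Real.sin θ₁ * Real.cos θ₁) by ring,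
      show (-Real.sin θ₁) ^ 2 = Real.sin θ₁ ^ 2 by ring, hsc, hs2]
    field_simp
    ring
  rw [hconv, hsplit, h1, h3, h2, h2val]
  ring

lemma polar_step {A B : ℝ} (hA : 0 < A) (hB : 0 < B) :
    ∫ p : ℝ × ℝ, max p.1 0 * max (A * p.1 + B * p.2) 0 * Real.exp (-(p.1 ^ 2 + p.2 ^ 2) / 2)
      = 2 * (A * π / 4 + A * Real.arctan (A / B) / 2 + B / 2) := by
  rw [← integral_comp_polarCoord_symm]
  have hcongr : ∀ p ∈ polarCoord.target,
      p.1 • (max (polarCoord.symm p).1 0 * max (A * (polarCoord.symm p).1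
          + B * (polarCoord.symm p).2) 0
        * Real.exp (-((polarCoord.symm p).1 ^ 2 + (polarCoord.symm p).2 ^ 2) / 2))
      = (p.1 ^ 3 * Real.exp (-p.1 ^ 2 / 2))
        * (max (Real.cos p.2) 0 * max (A * Real.cos p.2 + B * Real.sin p.2) 0) := by
    rintro ⟨r, θ⟩ ⟨hr, hθ⟩
    simp only [polarCoord_symm_apply]
    have hr' : (0:ℝ) < r := hr
    have h1 : max (r * Real.cos θ) 0 = r * max (Real.cos θ) 0 := by
      rw [mul_max_of_nonneg _ _ hr'.le, mul_zero]
    have h2 : max (A * (r * Real.cos θ) + B * (r * Real.sin θ)) 0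
        = r * max (A * Real.cos θ + B * Real.sin θ) 0 := by
      rw [mul_max_of_nonneg _ _ hr'.le, mul_zero]
      ring_nf
    have h3 : (r * Real.cos θ) ^ 2 + (r * Real.sin θ) ^ 2 = r ^ 2 := by
      have := Real.sin_sq_add_cos_sq θ
      ring_nf
      nlinarith
    rw [h1, h2, h3, smul_eq_mul]
    ring
  rw [setIntegral_congr_fun (polarCoord.open_target.measurableSet) hcongr]
  rw [show polarCoord.target = Ioi (0:ℝ) ×ˢ Ioo (-π) π from rfl]
  rw [Measure.volume_eq_prod]
  rw [setIntegral_prod_mul (μ := (volume : Measure ℝ)) (ν := (volume : Measure ℝ))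
    (fun r : ℝ => r ^ 3 * Real.exp (-r ^ 2 / 2))
    (fun θ : ℝ => max (Real.cos θ) 0 * max (A * Real.cos θ + B * Real.sin θ) 0)
    (Ioi 0) (Ioo (-π) π)]
  rw [radial_integral, angular_integral hA hB]

theorem gaussian_relu_product_moment (a b : ℝ≥0) (ha : 0 < a) (hb : 0 < b) :
    ∫ p : ℝ × ℝ,
        max p.1 0 * max (p.1 + p.2) 0
        ∂((gaussianReal 0 a).prod (gaussianReal 0 b))
      = (a : ℝ) / 4 +
          ((a : ℝ) / (2 * Real.pi)) * Real.arctan (Real.sqrt ((a : ℝ) / (b : ℝ))) +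
          Real.sqrt ((a : ℝ) * (b : ℝ)) / (2 * Real.pi) := by
  set A := Real.sqrt a with hAdef
  set B := Real.sqrt b with hBdef
  have haR : (0:ℝ) < a := ha
  have hbR : (0:ℝ) < b := hb
  have hA : 0 < A := Real.sqrt_pos.2 haR
  have hB : 0 < B := Real.sqrt_pos.2 hbR
  have hA2 : A * A = (a:ℝ) := Real.mul_self_sqrt haR.le
  have hB2 : B * B = (b:ℝ) := Real.mul_self_sqrt hbR.le
  have hπ : 0 < π := Real.pi_pos
  set G : ℝ × ℝ → ℝ := fun p =>
    (gaussianPDFReal 0 a p.1 * gaussianPDFReal 0 b p.2) * (max p.1 0 * max (p.1 + p.2) 0)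
    with hGdef
  have hpdfc : ∀ v : ℝ≥0, Continuous (gaussianPDFReal 0 v) := by
    intro v
    rw [gaussianPDFReal_def]
    fun_prop
  have hGcont : Continuous G := by
    apply Continuous.mul
    · exact ((hpdfc a).comp continuous_fst).mul ((hpdfc b).comp continuous_snd)
    · exact (continuous_fst.max continuous_const).mul
        ((continuous_fst.add continuous_snd).max continuous_const)
  rw [integral_gaussian_prod a b ha.ne' hb.ne' _]
  have step2 : (∫ p : ℝ × ℝ, G p) = (A * B) * ∫ p : ℝ × ℝ, G (A * p.1, B * p.2) := by
    rw [integral_scaling hA hB G hGcont]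
    field_simp
  have hpdfval : ∀ (v : ℝ≥0) (hv : (0:ℝ) < v) (x : ℝ),
      gaussianPDFReal 0 v (Real.sqrt v * x)
        = (Real.sqrt (2 * π * v))⁻¹ * Real.exp (-x ^ 2 / 2) := by
    intro v hv x
    rw [gaussianPDFReal]
    congr 1
    rw [sub_zero]
    congr 1
    rw [mul_pow, Real.sq_sqrt hv.le]
    field_simp
  set c : ℝ := (Real.sqrt (2 * π * a))⁻¹ * (Real.sqrt (2 * π * b))⁻¹ * A with hcdef
  have hpoint : ∀ p : ℝ × ℝ, G (A * p.1, B * p.2)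
      = c * (max p.1 0 * max (A * p.1 + B * p.2) 0
          * Real.exp (-(p.1 ^ 2 + p.2 ^ 2) / 2)) := by
    rintro ⟨u, v⟩
    simp only [hGdef, hcdef]
    rw [hpdfval a haR u, hpdfval b hbR v]
    have hmax : max (A * u) 0 = A * max u 0 := by
      rw [mul_max_of_nonneg _ _ hA.le, mul_zero]
    rw [hmax]
    rw [show Real.exp (-(u ^ 2 + v ^ 2) / 2) = Real.exp (-u ^ 2 / 2) * Real.exp (-v ^ 2 / 2)
        from by rw [← Real.exp_add]; ring_nf]
    ring
  have step3 : (∫ p : ℝ × ℝ, G (A * p.1, B * p.2))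
      = c * (2 * (A * π / 4 + A * Real.arctan (A / B) / 2 + B / 2)) := by
    simp_rw [hpoint]
    rw [MeasureTheory.integral_const_mul, polar_step hA hB]
  rw [show (fun p : ℝ × ℝ => gaussianPDFReal 0 a p.1 * gaussianPDFReal 0 b p.2
      * (max p.1 0 * max (p.1 + p.2) 0)) = G from rfl]
  rw [step2, step3]
  -- now pure arithmetic
  have hsab : Real.sqrt (2 * π * a) = Real.sqrt (2 * π) * A := by
    rw [Real.sqrt_mul (by positivity)]
  have hsbb : Real.sqrt (2 * π * b) = Real.sqrt (2 * π) * B := by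
    rw [Real.sqrt_mul (by positivity)]
  have hS2 : Real.sqrt (2 * π) * Real.sqrt (2 * π) = 2 * π := Real.mul_self_sqrt (by positivity)
  have hS : 0 < Real.sqrt (2 * π) := Real.sqrt_pos.2 (by positivity)
  have harctan : Real.arctan (A / B) = Real.arctan (Real.sqrt ((a:ℝ) / (b:ℝ))) := by
    rw [Real.sqrt_div haR.le]
  have hab : Real.sqrt ((a:ℝ) * (b:ℝ)) = A * B := Real.sqrt_mul haR.le _
  rw [hcdef, hsab, hsbb, harctan, hab, ← hA2, ← hB2]
  field_simp
  ring_nf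
  have h2π : Real.sqrt 2 ^ 2 * Real.sqrt π ^ 2 = 2 * π := by
    rw [Real.sq_sqrt (by norm_num : (0:ℝ) ≤ 2), Real.sq_sqrt hπ.le]
  linear_combination -(Real.sq_sqrt (by positivity : (0:ℝ) ≤ π * 2))
end

section
/- Let x₁ ~ N(0,a), x₂ ~ N(0,b), x₃ ~ N(0,c) be independent centered Gaussians, and σ the Leaky ReLU with slope κ. Then E[x₂·σ(x₁)·σ'(x₁+x₂+x₃)] = (1−κ)²·b·√(a(b+c))/(2π(a+b+c)). -/
open MeasureTheory ProbabilityTheory Real Filter Set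
open scoped NNReal ENNReal


-- FTC half-line integrals
lemma int_Ioi_mul_exp {r : ℝ} (hr : 0 < r) (t : ℝ) :
    ∫ y in Set.Ioi t, y * Real.exp (-(r * y ^ 2)) = Real.exp (-(r * t ^ 2)) / (2 * r) := by
  have hderiv : ∀ x ∈ Set.Ici t,
      HasDerivAt (fun y => -(Real.exp (-(r * y ^ 2)) / (2 * r)))
        (x * Real.exp (-(r * x ^ 2))) x := by
    intro x _
    have h1 : HasDerivAt (fun y : ℝ => -(r * y ^ 2)) (-(r * (2 * x))) x := by
      simpa using ((hasDerivAt_pow 2 x).const_mul r).fun_neg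
    have h2 := (h1.exp).div_const (2 * r)
    have h3 := h2.fun_neg
    refine h3.congr_deriv ?_
    rw [mul_neg, neg_div, neg_neg, show r * (2 * x) = x * (2 * r) by ring, ← mul_assoc,
      mul_div_assoc, div_self (mul_ne_zero two_ne_zero hr.ne'), mul_one]
    ring
  have hint : IntegrableOn (fun y => y * Real.exp (-(r * y ^ 2))) (Set.Ioi t) := by
    have := integrable_mul_exp_neg_mul_sq hr
    exact (this.integrableOn).mono_set (Set.subset_univ _) |>.congr_fun
      (fun x _ => by ring_nf) measurableSet_Ioi
  have htend : Tendsto (fun y => -(Real.exp (-(r * y ^ 2)) / (2 * r))) atTop (nhds 0) := by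
    have h1 : Tendsto (fun y : ℝ => -(r * y ^ 2)) atTop atBot := by
      have : Tendsto (fun y : ℝ => r * y ^ 2) atTop atTop :=
        (tendsto_pow_atTop (by norm_num)).const_mul_atTop hr
      exact tendsto_neg_atBot_iff.mpr this
    have := (Real.tendsto_exp_atBot.comp h1).div_const (2 * r)
    simpa using this.neg
  have := integral_Ioi_of_hasDerivAt_of_tendsto' hderiv hint htend
  rw [this]
  ring

lemma int_Iio_mul_exp {r : ℝ} (hr : 0 < r) (t : ℝ) :
    ∫ y in Set.Iio t, y * Real.exp (-(r * y ^ 2)) = -(Real.exp (-(r * t ^ 2)) / (2 * r)) := by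
  have h := integral_comp_neg_Ioi (-t) (fun y => y * Real.exp (-(r * y ^ 2)))
  simp only [neg_neg] at h
  have h2 : (∫ x in Set.Ioi (-t), (fun y => y * Real.exp (-(r * y ^ 2))) (-x))
      = -∫ x in Set.Ioi (-t), x * Real.exp (-(r * x ^ 2)) := by
    rw [← integral_neg]
    congr 1 with x
    simp [neg_sq]
  rw [h2, int_Ioi_mul_exp hr] at h
  have : ∫ y in Set.Iio t, y * Real.exp (-(r * y ^ 2))
      = ∫ y in Set.Iic t, y * Real.exp (-(r * y ^ 2)) := by
    rw [← integral_Iic_eq_integral_Iio]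
  rw [this, ← h, neg_sq]

-- shifted gaussian
lemma int_exp_shift {r : ℝ} (hr : 0 < r) (m : ℝ) :
    ∫ z : ℝ, Real.exp (-(r * (z + m) ^ 2)) = Real.sqrt (Real.pi / r) := by
  have h := MeasureTheory.integral_add_right_eq_self (μ := volume) (fun z : ℝ => Real.exp (-(r * z ^ 2))) m
  calc ∫ z : ℝ, Real.exp (-(r * (z + m) ^ 2))
      = ∫ z : ℝ, Real.exp (-r * z ^ 2) := by
        rw [h]; congr 1 with z; ring_nf
    _ = Real.sqrt (Real.pi / r) := integral_gaussian r

-- conversion to density integral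
lemma gint {v : ℝ≥0} (hv : v ≠ 0) (g : ℝ → ℝ) :
    ∫ x, g x ∂(gaussianReal 0 v) = ∫ x, gaussianPDFReal 0 v x * g x := by
  rw [gaussianReal_of_var_ne_zero _ hv, gaussianPDF_def]
  have hmeas : Measurable (fun x => (gaussianPDFReal 0 v x).toNNReal) :=
    (measurable_gaussianPDFReal 0 v).real_toNNReal
  have : (fun x => ENNReal.ofReal (gaussianPDFReal 0 v x))
      = fun x => ((gaussianPDFReal 0 v x).toNNReal : ℝ≥0∞) := rfl
  rw [this, integral_withDensity_eq_integral_smul hmeas]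
  congr 1 with x
  simp [NNReal.smul_def, Real.coe_toNNReal _ (gaussianPDFReal_nonneg 0 v x)]

-- odd function has zero volume integral
lemma odd_int_zero (f : ℝ → ℝ) (hf : ∀ x, f (-x) = -f x) : ∫ x : ℝ, f x = 0 := by
  have h := MeasureTheory.integral_neg_eq_self f (volume : Measure ℝ)
  simp only [hf, integral_neg] at h
  linarith

-- gaussian pdf simplification
lemma gpdf (v : ℝ≥0) (x : ℝ) :
    gaussianPDFReal 0 v x = (Real.sqrt (2 * Real.pi * v))⁻¹ * Real.exp (-(x ^ 2 / (2 * v))) := by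
  simp [gaussianPDFReal, neg_div]

lemma gint_id {v : ℝ≥0} (hv : v ≠ 0) : ∫ x, x ∂(gaussianReal 0 v) = 0 := by
  rw [gint hv]
  apply odd_int_zero
  intro x
  simp [gpdf, neg_sq]

-- integrability of |x| under gaussian
lemma gint_abs_integrable {v : ℝ≥0} (hv : 0 < v) :
    Integrable (fun x => |x|) (gaussianReal 0 v) := by
  rw [gaussianReal_of_var_ne_zero _ hv.ne']
  rw [gaussianPDF_def]
  rw [integrable_withDensity_iff ((measurable_gaussianPDFReal 0 v).ennreal_ofReal) (Eventually.of_forall fun x => ENNReal.ofReal_lt_top)]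
  have hr : (0:ℝ) < (2 * (v:ℝ))⁻¹ := by positivity
  have base := integrable_mul_exp_neg_mul_sq hr
  have : Integrable (fun x : ℝ => |x * Real.exp (-(2 * (v:ℝ))⁻¹ * x ^ 2)| * (Real.sqrt (2 * Real.pi * v))⁻¹) volume :=
    base.abs.mul_const _
  apply this.congr
  apply Eventually.of_forall
  intro x
  have hvv : (0:ℝ) < (v:ℝ) := hv
  show |x * Real.exp (-(2 * (v:ℝ))⁻¹ * x ^ 2)| * (Real.sqrt (2 * Real.pi * v))⁻¹
      = |x| * (ENNReal.ofReal (gaussianPDFReal 0 v x)).toReal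
  rw [ENNReal.toReal_ofReal (gaussianPDFReal_nonneg 0 v x)]
  rw [gpdf]
  rw [abs_mul, abs_of_nonneg (Real.exp_nonneg _)]
  rw [show -(2 * (v:ℝ))⁻¹ * x ^ 2 = -(x ^ 2 / (2 * v)) by field_simp]
  ring

lemma K_half {v : ℝ≥0} (hv : 0 < v) (t : ℝ) :
    ∫ y, (if t ≤ y then y else 0) ∂(gaussianReal 0 v)
      = (Real.sqrt (2 * Real.pi * v))⁻¹ * Real.exp (-(t ^ 2 / (2 * v))) * v := by
  have hvv : (0:ℝ) < (v:ℝ) := hv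
  have hr : (0:ℝ) < (2 * (v:ℝ))⁻¹ := by positivity
  rw [gint hv.ne']
  have h1 : (fun y => gaussianPDFReal 0 v y * (if t ≤ y then y else 0))
      = Set.indicator (Set.Ici t) (fun y => (Real.sqrt (2 * Real.pi * v))⁻¹
          * (y * Real.exp (-((2 * (v:ℝ))⁻¹ * y ^ 2)))) := by
    funext y
    rw [Set.indicator_apply]
    simp only [Set.mem_Ici, gpdf]
    have : -(y ^ 2 / (2 * (v:ℝ))) = -((2 * (v:ℝ))⁻¹ * y ^ 2) := by field_simp
    split_ifs with h
    · rw [this]; ring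
    · ring
  rw [h1, integral_indicator measurableSet_Ici, integral_Ici_eq_integral_Ioi,
    integral_const_mul, int_Ioi_mul_exp hr]
  have h2 : -((2 * (v:ℝ))⁻¹ * t ^ 2) = -(t ^ 2 / (2 * v)) := by field_simp
  rw [h2]
  field_simp

lemma K2 {c : ℝ≥0} (hc : 0 < c) {B : ℝ} (hB : 0 < B) (x : ℝ) :
    ∫ z, Real.exp (-((x + z) ^ 2 / (2 * B))) ∂(gaussianReal 0 c)
      = Real.sqrt (B / (B + c)) * Real.exp (-(x ^ 2 / (2 * (B + c)))) := by
  have hcc : (0:ℝ) < (c:ℝ) := hc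
  have hR : (0:ℝ) < (B + c) / (2 * B * c) := by positivity
  rw [gint hc.ne']
  have h1 : (fun z => gaussianPDFReal 0 c z * Real.exp (-((x + z) ^ 2 / (2 * B))))
      = fun z => ((Real.sqrt (2 * Real.pi * c))⁻¹ * Real.exp (-(x ^ 2 / (2 * (B + c)))))
          * Real.exp (-((B + c) / (2 * B * c) * (z + c * x / (B + c)) ^ 2)) := by
    funext z
    rw [gpdf, mul_assoc ((Real.sqrt (2 * Real.pi * (c:ℝ)))⁻¹),
      mul_assoc ((Real.sqrt (2 * Real.pi * (c:ℝ)))⁻¹), ← Real.exp_add, ← Real.exp_add]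
    congr 2
    field_simp
    ring
  rw [h1, integral_const_mul, int_exp_shift hR]
  have h2 : Real.pi / ((B + c) / (2 * B * c)) = (2 * Real.pi * c) * (B / (B + c)) := by
    field_simp
  rw [h2, show Real.sqrt (2 * Real.pi * (c:ℝ) * (B / (B + c)))
      = Real.sqrt (2 * Real.pi * (c:ℝ)) * Real.sqrt (B / (B + c))
    from Real.sqrt_mul (by positivity) _]
  rw [show (Real.sqrt (2 * Real.pi * c))⁻¹ * Real.exp (-(x ^ 2 / (2 * (B + c))))
      * (Real.sqrt (2 * Real.pi * c) * Real.sqrt (B / (B + c)))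
      = (Real.sqrt (2 * Real.pi * c))⁻¹ * Real.sqrt (2 * Real.pi * c)
        * (Real.sqrt (B / (B + c)) * Real.exp (-(x ^ 2 / (2 * (B + c))))) by ring]
  rw [inv_mul_cancel₀ (Real.sqrt_ne_zero'.mpr (by positivity)), one_mul]

lemma K3 {a : ℝ≥0} (ha : 0 < a) {B : ℝ} (hB : 0 < B) (κ : ℝ) :
    ∫ x, (if 0 ≤ x then x else κ * x) * Real.exp (-(x ^ 2 / (2 * B))) ∂(gaussianReal 0 a)
      = (1 - κ) * (Real.sqrt (2 * Real.pi * a))⁻¹ * (a * B / (a + B)) := by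
  have haa : (0:ℝ) < (a:ℝ) := ha
  set r : ℝ := (a + B) / (2 * a * B) with hr_def
  have hr : 0 < r := by positivity
  set u : ℝ → ℝ := fun x => (Real.sqrt (2 * Real.pi * a))⁻¹ * (x * Real.exp (-(r * x ^ 2)))
    with hu_def
  have hu_int : Integrable u volume := by
    have := integrable_mul_exp_neg_mul_sq hr
    have h2 := this.const_mul (Real.sqrt (2 * Real.pi * a))⁻¹
    apply h2.congr
    apply Eventually.of_forall
    intro x
    simp only [hu_def]
    ring_nf
  rw [gint ha.ne']
  have h1 : (fun x => gaussianPDFReal 0 a x * ((if 0 ≤ x then x else κ * x)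
        * Real.exp (-(x ^ 2 / (2 * B)))))
      = fun x => Set.indicator (Set.Ici 0) u x + κ * Set.indicator (Set.Iio 0) u x := by
    funext x
    rw [gpdf]
    have key : -(x ^ 2 / (2 * (a:ℝ))) + -(x ^ 2 / (2 * B)) = -(r * x ^ 2) := by
      rw [hr_def]; field_simp; ring
    have hexp : Real.exp (-(x ^ 2 / (2 * (a:ℝ)))) * Real.exp (-(x ^ 2 / (2 * B)))
        = Real.exp (-(r * x ^ 2)) := by rw [← Real.exp_add, key]
    simp only [Set.indicator_apply, Set.mem_Ici, Set.mem_Iio, hu_def]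
    split_ifs with h h2 h3
    · linarith
    · rw [← hexp]; ring
    · rw [← hexp]; ring
    · linarith
  rw [h1, integral_add (hu_int.indicator measurableSet_Ici)
      ((hu_int.indicator measurableSet_Iio).const_mul κ),
    integral_const_mul, integral_indicator measurableSet_Ici,
    integral_indicator measurableSet_Iio, integral_Ici_eq_integral_Ioi]
  have e1 : ∫ x in Set.Ioi (0:ℝ), u x = (Real.sqrt (2 * Real.pi * a))⁻¹ * (1 / (2 * r)) := by
    rw [hu_def]
    simp only []
    rw [integral_const_mul, int_Ioi_mul_exp hr]
    norm_num
  have e2 : ∫ x in Set.Iio (0:ℝ), u x = -((Real.sqrt (2 * Real.pi * a))⁻¹ * (1 / (2 * r))) := by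
    rw [hu_def]
    simp only []
    rw [integral_const_mul, int_Iio_mul_exp hr]
    norm_num
  rw [e1, e2]
  have h2r : 1 / (2 * r) = a * B / (a + B) := by
    rw [hr_def]; field_simp
  rw [h2r]
  ring

lemma final_alg (a b c κ : ℝ) (ha : 0 < a) (hb : 0 < b) (hc : 0 < c) :
    (1 - κ) * (Real.sqrt (2 * Real.pi * a))⁻¹ * (a * (b + c) / (a + (b + c)))
        * ((1 - κ) * b * (Real.sqrt (2 * Real.pi * b))⁻¹ * Real.sqrt (b / (b + c)))
      = (1 - κ) ^ 2 * b * Real.sqrt (a * (b + c)) / (2 * Real.pi * (a + b + c)) := by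
  have h2π : (0:ℝ) ≤ 2 * Real.pi := by positivity
  rw [Real.sqrt_mul h2π a, Real.sqrt_mul h2π b, Real.sqrt_mul ha.le (b + c),
    Real.sqrt_div hb.le (b + c)]
  have hsp : Real.sqrt (2 * Real.pi) ^ 2 = 2 * Real.pi := Real.sq_sqrt h2π
  have hsa : Real.sqrt a ^ 2 = a := Real.sq_sqrt ha.le
  have hsb : Real.sqrt b ^ 2 = b := Real.sq_sqrt hb.le
  have hsB : Real.sqrt (b + c) ^ 2 = b + c := Real.sq_sqrt (by positivity)
  have hspne : Real.sqrt (2 * Real.pi) ≠ 0 := by positivity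
  have hsane : Real.sqrt a ≠ 0 := by positivity
  have hsbne : Real.sqrt b ≠ 0 := by positivity
  have hsBne : Real.sqrt (b + c) ≠ 0 := by positivity
  have habc : a + (b + c) ≠ 0 := by positivity
  have habc' : a + b + c ≠ 0 := by positivity
  have h2 : Real.sqrt 2 ^ 2 = 2 := Real.sq_sqrt (by norm_num)
  have hπ : Real.sqrt Real.pi ^ 2 = Real.pi := Real.sq_sqrt Real.pi_pos.le
  rw [show a * (b + c) = (Real.sqrt a * Real.sqrt (b + c)) ^ 2 by rw [mul_pow, hsa, hsB],
    show 2 * Real.pi * (a + b + c) = Real.sqrt (2 * Real.pi) ^ 2 * (a + b + c) by rw [hsp]]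
  field_simp
  ring

theorem gaussian_F5_leaky_moment (a b c : ℝ≥0) (ha : 0 < a) (hb : 0 < b)
    (hc : 0 < c) (κ : ℝ) :
    ∫ q : ℝ × ℝ × ℝ,
        q.2.1 * (if 0 ≤ q.1 then q.1 else κ * q.1) *
          (if 0 ≤ q.1 + q.2.1 + q.2.2 then (1:ℝ) else κ)
        ∂((gaussianReal 0 a).prod ((gaussianReal 0 b).prod (gaussianReal 0 c)))
      = (1 - κ) ^ 2 * (b : ℝ) * Real.sqrt ((a : ℝ) * ((b : ℝ) + (c : ℝ))) /
          (2 * Real.pi * ((a : ℝ) + (b : ℝ) + (c : ℝ))) := by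
  set γa := gaussianReal 0 a
  set γb := gaussianReal 0 b
  set γc := gaussianReal 0 c
  set M : ℝ := max 1 |κ| with hM_def
  have hM1 : (1:ℝ) ≤ M := le_max_left _ _
  have hMκ : |κ| ≤ M := le_max_right _ _
  have hM0 : (0:ℝ) ≤ M := le_trans zero_le_one hM1
  -- abs bounds
  have hσ : ∀ x : ℝ, |if 0 ≤ x then x else κ * x| ≤ M * |x| := by
    intro x
    split_ifs with h
    · nlinarith [abs_nonneg x]
    · rw [abs_mul]; nlinarith [abs_nonneg x, abs_nonneg κ]
  have hs' : ∀ t : ℝ, |if 0 ≤ t then (1:ℝ) else κ| ≤ M := by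
    intro t; split_ifs with h
    · simpa using hM1
    · exact hMκ
  -- integrable |y| on the (y,z) product
  have habs_b : Integrable (fun y => |y|) γb := gint_abs_integrable hb
  have habs_a : Integrable (fun x => |x|) γa := gint_abs_integrable ha
  have hy_prod : Integrable (fun p : ℝ × ℝ => |p.1|) (γb.prod γc) := by
    have := habs_b.mul_prod (integrable_const (1:ℝ) (μ := γc))
    exact this.congr (Eventually.of_forall fun p => by simp)
  have hid_b : Integrable (fun y : ℝ => y) γb :=
    habs_b.mono' measurable_id.aestronglyMeasurable (Eventually.of_forall fun y => by simp)
  -- measurability of the full integrand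
  have m1 : Measurable (fun q : ℝ × ℝ × ℝ => if 0 ≤ q.1 then q.1 else κ * q.1) :=
    Measurable.ite (measurableSet_le measurable_const measurable_fst) measurable_fst
      (measurable_fst.const_mul κ)
  have m2 : Measurable (fun q : ℝ × ℝ × ℝ => if 0 ≤ q.1 + q.2.1 + q.2.2 then (1:ℝ) else κ) :=
    Measurable.ite (measurableSet_le measurable_const
      ((measurable_fst.add measurable_snd.fst).add measurable_snd.snd))
      measurable_const measurable_const
  have hF_meas : Measurable (fun q : ℝ × ℝ × ℝ =>
      q.2.1 * (if 0 ≤ q.1 then q.1 else κ * q.1) *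
        (if 0 ≤ q.1 + q.2.1 + q.2.2 then (1:ℝ) else κ)) :=
    (measurable_snd.fst.mul m1).mul m2
  -- integrability of the full integrand
  have hG_int : Integrable (fun q : ℝ × ℝ × ℝ => (M * |q.1|) * (M * |q.2.1|))
      (γa.prod (γb.prod γc)) := by
    have h1 : Integrable (fun x : ℝ => M * |x|) γa := habs_a.const_mul M
    have h2 : Integrable (fun p : ℝ × ℝ => M * |p.1|) (γb.prod γc) := hy_prod.const_mul M
    exact h1.mul_prod h2
  have hF_int : Integrable (fun q : ℝ × ℝ × ℝ =>
      q.2.1 * (if 0 ≤ q.1 then q.1 else κ * q.1) *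
        (if 0 ≤ q.1 + q.2.1 + q.2.2 then (1:ℝ) else κ)) (γa.prod (γb.prod γc)) := by
    apply hG_int.mono' hF_meas.aestronglyMeasurable
    apply Eventually.of_forall
    intro q
    rw [Real.norm_eq_abs, abs_mul, abs_mul]
    calc |q.2.1| * |if 0 ≤ q.1 then q.1 else κ * q.1| * |if 0 ≤ q.1 + q.2.1 + q.2.2 then (1:ℝ) else κ|
        ≤ |q.2.1| * (M * |q.1|) * M := by
          apply mul_le_mul _ (hs' _) (abs_nonneg _) _
          · exact mul_le_mul le_rfl (hσ _) (abs_nonneg _) (abs_nonneg _)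
          · positivity
      _ = (M * |q.1|) * (M * |q.2.1|) := by ring
  rw [integral_prod _ hF_int]
  -- inner computation
  set D : ℝ := (1 - κ) * (b : ℝ) * (Real.sqrt (2 * Real.pi * b))⁻¹
      * Real.sqrt ((b : ℝ) / ((b : ℝ) + (c : ℝ))) with hD_def
  have key : ∀ x : ℝ, (∫ p : ℝ × ℝ, p.1 * (if 0 ≤ x then x else κ * x) *
        (if 0 ≤ x + p.1 + p.2 then (1:ℝ) else κ) ∂(γb.prod γc))
      = (if 0 ≤ x then x else κ * x)
          * Real.exp (-(x ^ 2 / (2 * ((b : ℝ) + (c : ℝ))))) * D := by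
    intro x
    have mJ : Measurable (fun p : ℝ × ℝ =>
        p.1 * (if 0 ≤ x + p.1 + p.2 then (1:ℝ) else κ)) := by
      apply measurable_fst.mul
      exact Measurable.ite (measurableSet_le measurable_const
        ((measurable_const.add measurable_fst).add measurable_snd))
        measurable_const measurable_const
    have hJ_int : Integrable (fun p : ℝ × ℝ =>
        p.1 * (if 0 ≤ x + p.1 + p.2 then (1:ℝ) else κ)) (γb.prod γc) := by
      apply (hy_prod.const_mul M).mono' mJ.aestronglyMeasurable
      apply Eventually.of_forall
      intro p
      rw [Real.norm_eq_abs, abs_mul]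
      calc |p.1| * |if 0 ≤ x + p.1 + p.2 then (1:ℝ) else κ|
          ≤ |p.1| * M := mul_le_mul le_rfl (hs' _) (abs_nonneg _) (abs_nonneg _)
        _ = M * |p.1| := by ring
    have step1 : (fun p : ℝ × ℝ => p.1 * (if 0 ≤ x then x else κ * x) *
          (if 0 ≤ x + p.1 + p.2 then (1:ℝ) else κ))
        = fun p => (if 0 ≤ x then x else κ * x) *
          (p.1 * (if 0 ≤ x + p.1 + p.2 then (1:ℝ) else κ)) := by
      funext p; ring
    rw [step1, integral_const_mul, integral_prod_symm _ hJ_int]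
    -- inner y-integral
    have inner_y : ∀ z : ℝ, (∫ y, y * (if 0 ≤ x + y + z then (1:ℝ) else κ) ∂γb)
        = (1 - κ) * ((Real.sqrt (2 * Real.pi * b))⁻¹
            * Real.exp (-((x + z) ^ 2 / (2 * (b:ℝ)))) * b) := by
      intro z
      have split : (fun y : ℝ => y * (if 0 ≤ x + y + z then (1:ℝ) else κ))
          = fun y => κ * y + (1 - κ) * (if -(x + z) ≤ y then y else 0) := by
        funext y
        by_cases h : 0 ≤ x + y + z
        · rw [if_pos h, if_pos (by linarith)]; ring
        · rw [if_neg h, if_neg (by intro hh; exact h (by linarith))]; ring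
      have hite_int : Integrable (fun y : ℝ => if -(x + z) ≤ y then y else 0) γb := by
        apply habs_b.mono' _ (Eventually.of_forall fun y => ?_)
        · exact (Measurable.ite (measurableSet_le measurable_const measurable_id)
            measurable_id measurable_const).aestronglyMeasurable
        · rw [Real.norm_eq_abs]; split_ifs <;> simp
      rw [split, integral_add (hid_b.const_mul κ) (hite_int.const_mul (1 - κ)),
        integral_const_mul, integral_const_mul, gint_id hb.ne', K_half hb (-(x + z))]
      rw [neg_sq (x + z)]
      ring
    rw [integral_congr_ae (Eventually.of_forall fun z => inner_y z)]
    -- z-integral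
    have step2 : (fun z : ℝ => (1 - κ) * ((Real.sqrt (2 * Real.pi * b))⁻¹
          * Real.exp (-((x + z) ^ 2 / (2 * (b:ℝ)))) * b))
        = fun z => ((1 - κ) * (Real.sqrt (2 * Real.pi * b))⁻¹ * b)
            * Real.exp (-((x + z) ^ 2 / (2 * (b:ℝ)))) := by
      funext z; ring
    have hbb : (0:ℝ) < (b:ℝ) := hb
    rw [step2, integral_const_mul, K2 hc hbb x]
    rw [hD_def]
    ring
  rw [integral_congr_ae (Eventually.of_forall fun x => key x)]
  have step3 : (fun x : ℝ => (if 0 ≤ x then x else κ * x)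
        * Real.exp (-(x ^ 2 / (2 * ((b : ℝ) + (c : ℝ))))) * D)
      = fun x => ((if 0 ≤ x then x else κ * x)
        * Real.exp (-(x ^ 2 / (2 * ((b : ℝ) + (c : ℝ)))))) * D := by
    funext x; ring
  have hBpos : (0:ℝ) < (b : ℝ) + (c : ℝ) := by positivity
  rw [step3, integral_mul_const, K3 ha hBpos κ]
  rw [hD_def]
  have := final_alg (a:ℝ) (b:ℝ) (c:ℝ) κ ha hb hc
  calc (1 - κ) * (Real.sqrt (2 * Real.pi * a))⁻¹ * ((a:ℝ) * ((b:ℝ)+(c:ℝ)) / ((a:ℝ) + ((b:ℝ)+(c:ℝ))))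
        * ((1 - κ) * (b:ℝ) * (Real.sqrt (2 * Real.pi * b))⁻¹ * Real.sqrt ((b:ℝ) / ((b:ℝ)+(c:ℝ))))
      = (1 - κ) ^ 2 * (b:ℝ) * Real.sqrt ((a:ℝ) * ((b:ℝ) + (c:ℝ))) /
          (2 * Real.pi * ((a:ℝ) + (b:ℝ) + (c:ℝ))) := this
end

section
/- Let (x_t)_{t≥0} be a positive real sequence satisfying x_{t+1} = x_t + c₁·e^{−c₂·x_t} for all t ≥ 0, where c₁, c₂ > 0 are constants. Then for all natural numbers t, (1/c₂)·log(c₁c₂t + e^{c₂x₀}) ≤ x_t ≤ c₁·e^{−c₂x₀} + (1/c₂)·log(c₁c₂t + e^{c₂x₀}). -/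
theorem exp_sequence_bounds (x : ℕ → ℝ) (c₁ c₂ : ℝ) (hc₁ : 0 < c₁)
    (hc₂ : 0 < c₂) (hpos : ∀ t, 0 < x t)
    (hrec : ∀ t, x (t + 1) = x t + c₁ * Real.exp (-c₂ * x t)) :
    ∀ t : ℕ,
      (1 / c₂) * Real.log (c₁ * c₂ * t + Real.exp (c₂ * x 0)) ≤ x t ∧
      x t ≤ c₁ * Real.exp (-c₂ * x 0) +
        (1 / c₂) * Real.log (c₁ * c₂ * t + Real.exp (c₂ * x 0)) := by
  set A := Real.exp (c₂ * x 0) with hA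
  have hApos : 0 < A := Real.exp_pos _
  -- lower bound on exp(c₂ x t)
  have hlow : ∀ t : ℕ, c₁ * c₂ * t + A ≤ Real.exp (c₂ * x t) := by
    intro t
    induction t with
    | zero => simp; exact le_of_eq hA
    | succ n ih =>
      have h1 : Real.exp (c₂ * x (n + 1))
          = Real.exp (c₂ * x n) * Real.exp (c₂ * (c₁ * Real.exp (-c₂ * x n))) := by
        rw [hrec n, mul_add, Real.exp_add]
      have h2 : 1 + c₂ * (c₁ * Real.exp (-c₂ * x n))
          ≤ Real.exp (c₂ * (c₁ * Real.exp (-c₂ * x n))) := by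
        have := Real.add_one_le_exp (c₂ * (c₁ * Real.exp (-c₂ * x n)))
        linarith
      have h3 : Real.exp (c₂ * x n) * Real.exp (-c₂ * x n) = 1 := by
        rw [← Real.exp_add]; ring_nf; exact Real.exp_zero
      have h4 : Real.exp (c₂ * x n) * (1 + c₂ * (c₁ * Real.exp (-c₂ * x n)))
          = Real.exp (c₂ * x n) + c₂ * c₁ := by
        have : Real.exp (c₂ * x n) * (c₂ * (c₁ * Real.exp (-c₂ * x n)))
            = c₂ * c₁ * (Real.exp (c₂ * x n) * Real.exp (-c₂ * x n)) := by ring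
        rw [mul_add, mul_one, this, h3]; ring
      have hexp_pos : (0:ℝ) < Real.exp (c₂ * x n) := Real.exp_pos _
      have h5 : Real.exp (c₂ * x n) + c₂ * c₁ ≤ Real.exp (c₂ * x (n + 1)) := by
        rw [h1, ← h4]
        exact mul_le_mul_of_nonneg_left h2 (le_of_lt hexp_pos)
      push_cast
      push_cast at ih
      nlinarith
  have hBpos : ∀ t : ℕ, (0:ℝ) < c₁ * c₂ * t + A := by
    intro t
    have : (0:ℝ) ≤ c₁ * c₂ * t := by positivity
    linarith
  -- lower bound on x t
  have hxlow : ∀ t : ℕ, (1 / c₂) * Real.log (c₁ * c₂ * t + A) ≤ x t := by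
    intro t
    have h1 : Real.log (c₁ * c₂ * t + A) ≤ c₂ * x t := by
      have := Real.log_le_log (hBpos t) (hlow t)
      rwa [Real.log_exp] at this
    rw [div_mul_eq_mul_div, one_mul, div_le_iff₀ hc₂]
    linarith [h1]
  -- key upper bound
  have hkey : ∀ n : ℕ, x (n + 1) ≤ c₁ / A + (1 / c₂) * Real.log (c₁ * c₂ * n + A) := by
    intro n
    induction n with
    | zero =>
      have h1 : x 1 = x 0 + c₁ * Real.exp (-c₂ * x 0) := hrec 0
      have h2 : Real.exp (-c₂ * x 0) = 1 / A := by
        rw [show -c₂ * x 0 = -(c₂ * x 0) by ring, Real.exp_neg, one_div]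
      have h3 : Real.log A = c₂ * x 0 := Real.log_exp _
      rw [h1, h2]
      push_cast
      rw [show c₁ * c₂ * (0:ℝ) + A = A by ring, h3]
      have h4 : x 0 + c₁ * (1 / A) = c₁ / A + 1 / c₂ * (c₂ * x 0) := by
        field_simp; ring
      linarith [h4.le]
    | succ n ih =>
      have h1 : x (n + 2) = x (n + 1) + c₁ * Real.exp (-c₂ * x (n + 1)) := hrec (n + 1)
      set B := c₁ * c₂ * n + A with hB
      have hBp : 0 < B := hBpos n
      have hCp : 0 < B + c₁ * c₂ := by nlinarith
      have hC : c₁ * c₂ * ((n : ℝ) + 1) + A = B + c₁ * c₂ := by rw [hB]; ring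
      -- exp(-c₂ x(n+1)) ≤ 1/(B + c₁c₂)
      have h2 : Real.exp (-c₂ * x (n + 1)) ≤ 1 / (B + c₁ * c₂) := by
        have hl := hlow (n + 1)
        push_cast at hl
        rw [show c₁ * c₂ * ((n : ℝ) + 1) + A = B + c₁ * c₂ by rw [hB]; ring] at hl
        rw [show -c₂ * x (n + 1) = -(c₂ * x (n + 1)) by ring, Real.exp_neg,
          inv_eq_one_div]
        exact one_div_le_one_div_of_le hCp hl
      -- log(B + c) - log B ≥ c/(B+c)
      have h3 : c₁ * c₂ / (B + c₁ * c₂) ≤ Real.log (B + c₁ * c₂) - Real.log B := by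
        have he := Real.add_one_le_exp (-(c₁ * c₂ / (B + c₁ * c₂)))
        have hfrac : B / (B + c₁ * c₂) = 1 + -(c₁ * c₂ / (B + c₁ * c₂)) := by
          field_simp; ring
        have h4 : B / (B + c₁ * c₂) ≤ Real.exp (-(c₁ * c₂ / (B + c₁ * c₂))) := by
          rw [hfrac]; linarith
        have h5 : Real.log (B / (B + c₁ * c₂)) ≤ -(c₁ * c₂ / (B + c₁ * c₂)) := by
          have := Real.log_le_log (by positivity) h4
          rwa [Real.log_exp] at this
        rw [Real.log_div (ne_of_gt hBp) (ne_of_gt hCp)] at h5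
        linarith
      have h6 : c₁ * Real.exp (-c₂ * x (n + 1)) ≤ (1 / c₂) * (c₁ * c₂ / (B + c₁ * c₂)) := by
        rw [show (1 / c₂) * (c₁ * c₂ / (B + c₁ * c₂)) = c₁ * (1 / (B + c₁ * c₂)) by
          field_simp]
        exact mul_le_mul_of_nonneg_left h2 (le_of_lt hc₁)
      have h7 : (1 / c₂) * (c₁ * c₂ / (B + c₁ * c₂))
          ≤ (1 / c₂) * (Real.log (B + c₁ * c₂) - Real.log B) := by
        apply mul_le_mul_of_nonneg_left h3 (by positivity)
      push_cast
      rw [hC, hrec (n + 1)]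
      linarith
  intro t
  refine ⟨hxlow t, ?_⟩
  have hexpneg : c₁ * Real.exp (-c₂ * x 0) = c₁ / A := by
    rw [hA, show -c₂ * x 0 = -(c₂ * x 0) by ring, Real.exp_neg]
    field_simp
  cases t with
  | zero =>
    simp only [Nat.cast_zero, mul_zero, zero_add]
    rw [hexpneg, Real.log_exp]
    have : (1 / c₂) * (c₂ * x 0) = x 0 := by field_simp
    rw [this]
    linarith [div_pos hc₁ hApos, hexpneg ▸ (div_pos hc₁ hApos)]
  | succ n =>
    have hk := hkey n
    have hmono : Real.log (c₁ * c₂ * n + A) ≤ Real.log (c₁ * c₂ * (n + 1 : ℕ) + A) := by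
      apply Real.log_le_log (hBpos n)
      push_cast
      nlinarith
    rw [hexpneg]
    have : (1 / c₂) * Real.log (c₁ * c₂ * n + A)
        ≤ (1 / c₂) * Real.log (c₁ * c₂ * ((n:ℕ) + 1 : ℕ) + A) :=
      mul_le_mul_of_nonneg_left hmono (by positivity)
    push_cast at this hk ⊢
    linarith
end
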